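/- arXiv:1905.07811 — 3 statements merged into one kernel-verified Lean document; each statement's English description precedes it below -/
import Mathlib

section
/- There exist R₀ > 0 and C > 0 (depending only on c and N) such that if R ≥ R₀, then for every integer k ≥ 1 and every z with 4R_k ≤ |z| ≤ R_{k+1}/4, one can write f(z) = −C_k · (z/R_k)^{2n_k} · (1 + δ_k(z)) where |δ_k(z)| ≤ C·(R_k^{−1} + 4^{−n_k}). -/
open Complex

noncomputable section

/-- `f₀(z) = z² + c` iterated `N` times. -/
def f0iter (c : ℂ) (N : ℕ) (z : ℂ) : ℂ := (fun w => w ^ 2 + c)^[N] z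

/-- `n_k = 2^(N + k - 1)`. -/
def nseq (N k : ℕ) : ℕ := 2 ^ (N + k - 1)

/-- The radii `R_k`: `R₁ = 2R`, `R_{k+1} = max {|f_k(z)| : |z| = 2 R_k}` where
`f_k(z) = f₀^N(z) · ∏_{j=1}^k (1 - (1/2)(z/R_j)^{n_j})`. -/
def Rseq (c : ℂ) (N : ℕ) (R : ℝ) : ℕ → ℝ
  | 0 => R
  | 1 => 2 * R
  | k + 2 =>
      sSup ((fun z => ‖(f0iter c N z *
        ∏ j ∈ (Finset.Icc 1 (k + 1)).attach,
          (1 - (1 / 2) * (z / ((Rseq c N R j.1 : ℝ) : ℂ)) ^ nseq N j.1))‖) ''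
        Metric.sphere (0 : ℂ) (2 * Rseq c N R (k + 1)))
  decreasing_by
  · have := j.2; simp only [Finset.mem_Icc] at this; omega
  · omega

/-- `F_k(z) = 1 - (1/2)(z/R_k)^{n_k}`. -/
def Fseq (c : ℂ) (N : ℕ) (R : ℝ) (k : ℕ) (z : ℂ) : ℂ :=
  1 - (1 / 2) * (z / ((Rseq c N R k : ℝ) : ℂ)) ^ nseq N k

/-- The partial product `f_k(z) = f₀^N(z) · ∏_{j=1}^k F_j(z)`. -/
def fseq (c : ℂ) (N : ℕ) (R : ℝ) (k : ℕ) (z : ℂ) : ℂ :=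
  f0iter c N z * ∏ j ∈ Finset.Icc 1 k, Fseq c N R j z

/-- The infinite product `f(z) = f₀^N(z) · ∏_{k=1}^∞ F_k(z)`. -/
def flim (c : ℂ) (N : ℕ) (R : ℝ) (z : ℂ) : ℂ :=
  f0iter c N z * ∏' k : ℕ, Fseq c N R (k + 1) z

/-- The standing assumption `1/2 ≤ |f₀^N(z)|/|z|^{2^N} ≤ 2` for `|z| ≥ R`. -/
def OneBound (c : ℂ) (N : ℕ) (R : ℝ) : Prop :=
  ∀ z : ℂ, R ≤ ‖z‖ →
    1 / 2 ≤ ‖f0iter c N z‖ / ‖z‖ ^ 2 ^ N ∧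
    ‖f0iter c N z‖ / ‖z‖ ^ 2 ^ N ≤ 2

/-- `C₁ = R₁^{n₁}/2`, and for `k ≥ 2`,
`C_k = (-1)^{k-1} 2^{-k} R_k^{n_k} ∏_{j=1}^{k-1} R_j^{-n_j}`. -/
def Cseq (c : ℂ) (N : ℕ) (R : ℝ) (k : ℕ) : ℝ :=
  (-1) ^ (k - 1) * Rseq c N R k ^ nseq N k /
    (2 ^ k * ∏ j ∈ Finset.Icc 1 (k - 1), Rseq c N R j ^ nseq N j)

namespace Aux9


lemma abs_prod_one_add_sub_one_le {ι : Type*} (F : Finset ι) (u : ι → ℂ) :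
    ‖∏ i ∈ F, (1 + u i) - 1‖ ≤ ∏ i ∈ F, (1 + ‖u i‖) - 1 := by
  induction F using Finset.cons_induction with
  | empty => simp
  | cons a F ha ih =>
    rw [Finset.prod_cons, Finset.prod_cons]
    have h1 : (1 + u a) * ∏ i ∈ F, (1 + u i) - 1
        = (1 + u a) * (∏ i ∈ F, (1 + u i) - 1) + u a := by ring
    rw [h1]
    calc ‖(1 + u a) * (∏ i ∈ F, (1 + u i) - 1) + u a‖
        ≤ ‖(1 + u a) * (∏ i ∈ F, (1 + u i) - 1)‖ + ‖u a‖ :=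
          norm_add_le _ _
      _ = ‖1 + u a‖ * ‖∏ i ∈ F, (1 + u i) - 1‖ + ‖u a‖ := by
          rw [norm_mul]
      _ ≤ (1 + ‖u a‖) * (∏ i ∈ F, (1 + ‖u i‖) - 1) + ‖u a‖ := by
          have hA : ‖1 + u a‖ ≤ 1 + ‖u a‖ :=
            (norm_add_le _ _).trans (by simp)
          have hBn : (0:ℝ) ≤ ‖∏ i ∈ F, (1 + u i) - 1‖ := norm_nonneg _
          have hun : (0:ℝ) ≤ ‖u a‖ := norm_nonneg _
          nlinarith [ih]
      _ = (1 + ‖u a‖) * ∏ i ∈ F, (1 + ‖u i‖) - 1 := by ring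
  
lemma prod_one_add_le_exp {ι : Type*} (F : Finset ι) (w : ι → ℝ) (hw : ∀ i ∈ F, 0 ≤ w i) :
    ∏ i ∈ F, (1 + w i) ≤ Real.exp (∑ i ∈ F, w i) := by
  rw [Real.exp_sum]
  refine Finset.prod_le_prod (fun i hi => by linarith [hw i hi]) (fun i hi => ?_)
  linarith [Real.add_one_le_exp (w i)]

lemma abs_prod_sub_one_le_exp {ι : Type*} (F : Finset ι) (u : ι → ℂ) :
    ‖∏ i ∈ F, (1 + u i) - 1‖ ≤
      Real.exp (∑ i ∈ F, ‖u i‖) - 1 := by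
  refine (abs_prod_one_add_sub_one_le F u).trans ?_
  have := prod_one_add_le_exp F (fun i => ‖u i‖) (fun i _ => norm_nonneg _)
  linarith

lemma mul_sub_one_abs (a b : ℂ) :
    ‖a * b - 1‖ ≤ (1 + ‖a - 1‖) * (1 + ‖b - 1‖) - 1 := by
  have h : a * b - 1 = (a - 1) * (b - 1) + (a - 1) + (b - 1) := by ring
  rw [h]
  calc ‖(a - 1) * (b - 1) + (a - 1) + (b - 1)‖
      ≤ ‖(a - 1) * (b - 1)‖ + ‖a - 1‖ + ‖b - 1‖ := by
        refine (norm_add_le _ _).trans ?_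
        gcongr
        exact norm_add_le _ _
    _ = ‖a-1‖ * ‖b-1‖ + ‖a-1‖ + ‖b-1‖ := by
        rw [norm_mul]
    _ ≤ _ := by ring_nf; nlinarith [norm_nonneg (a-1), norm_nonneg (b-1)]

lemma exp_combine {a b : ℂ} {x y : ℝ} (hx : 0 ≤ x) (hy : 0 ≤ y)
    (ha : ‖a - 1‖ ≤ Real.exp x - 1) (hb : ‖b - 1‖ ≤ Real.exp y - 1) :
    ‖a * b - 1‖ ≤ Real.exp (x + y) - 1 := by
  refine (mul_sub_one_abs a b).trans ?_
  rw [Real.exp_add]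
  have h1 : 1 + ‖a-1‖ ≤ Real.exp x := by linarith
  have h2 : 1 + ‖b-1‖ ≤ Real.exp y := by linarith
  have p1 : (0:ℝ) ≤ 1 + ‖a-1‖ := by positivity
  nlinarith [norm_nonneg (b-1)]

lemma exp_sub_one_le {s : ℝ} (h0 : 0 ≤ s) (h1 : s ≤ 1) : Real.exp s - 1 ≤ 3 * s := by
  have h2 := Real.add_one_le_exp (-s)
  have h3 : Real.exp (-s) * Real.exp s = 1 := by
    rw [← Real.exp_add]; simp
  have h4 : Real.exp s ≤ Real.exp 1 := Real.exp_le_exp.2 h1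
  have h5 : Real.exp 1 ≤ 3 := by
    have := Real.exp_one_lt_d9; linarith
  nlinarith [Real.exp_pos s]

lemma tail_prod (u : ℕ → ℂ) (v : ℕ → ℝ) (hb : ∀ i, ‖u i‖ ≤ v i)
    (hv2 : ∀ i, v i ≤ 1/2) (hv : Summable v) :
    ∃ T : ℂ, HasProd (fun i => 1 + u i) T ∧
      ‖T - 1‖ ≤ Real.exp (∑' i, v i) - 1 := by
  have hvn : ∀ i, 0 ≤ v i := fun i => (norm_nonneg _).trans (hb i)
  have hne : ∀ (_ : Unit) (n : ℕ), (fun i (_ : Unit) => 1 + u i) n () ≠ 0 := by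
    intro _ n
    simp only []
    intro h
    have : ‖u n‖ = 1 := by
      have : u n = -1 := by linear_combination h
      rw [this]; simp
    have := hb n; have := hv2 n; linarith
  have hlog : ∀ (_ : Unit), Summable fun n => Complex.log ((fun i (_ : Unit) => 1 + u i) n ()) := by
    intro _
    refine Summable.of_norm_bounded (hv.mul_left (3/2)) (fun i => ?_)
    have h1 : ‖u i‖ ≤ 1/2 := le_trans (hb i) (hv2 i)
    have := Complex.norm_log_one_add_half_le_self h1
    calc ‖Complex.log (1 + u i)‖ ≤ (3/2) * ‖u i‖ := this
      _ ≤ (3/2) * v i := by have := hb i; linarith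
  have hM : Multipliable fun i => 1 + u i :=
    Complex.multipliable_of_summable_log (hlog ())
  refine ⟨∏' i, (1 + u i), hM.hasProd, ?_⟩
  have htend : Filter.Tendsto (fun F : Finset ℕ => ‖(∏ i ∈ F, (1 + u i)) - 1‖)
      Filter.atTop (nhds (‖(∏' i, (1 + u i)) - 1‖)) := by
    exact (continuous_norm.tendsto _).comp ((continuous_sub_right (1:ℂ)).continuousAt.tendsto.comp hM.hasProd)
  refine le_of_tendsto htend (Filter.Eventually.of_forall (fun F => ?_))
  refine (abs_prod_sub_one_le_exp F u).trans ?_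
  have hle : ∑ i ∈ F, ‖u i‖ ≤ ∑' i, v i := by
    refine le_trans (Finset.sum_le_sum (fun i _ => hb i)) (Summable.sum_le_tsum F (fun i _ => hvn i) hv)
  have := Real.exp_le_exp.2 hle
  linarith



lemma poly_bound (c : ℂ) (N : ℕ) : ∃ A : ℝ, 0 ≤ A ∧ ∀ z : ℂ, 1 ≤ ‖z‖ →
    ‖f0iter c N z - z ^ 2 ^ N‖ ≤ A * ‖z‖ ^ (2 ^ N - 1) := by
  induction N with
  | zero =>
    refine ⟨0, le_refl _, fun z hz => ?_⟩
    simp [f0iter]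
  | succ n ih =>
    obtain ⟨a, ha0, ha⟩ := ih
    refine ⟨2 * a + a ^ 2 + ‖c‖, by positivity, fun z hz => ?_⟩
    have hz0 : (0:ℝ) < ‖z‖ := lt_of_lt_of_le one_pos hz
    have he := ha z hz
    have hp : (z ^ 2 ^ n) ^ 2 = z ^ 2 ^ (n + 1) := by
      rw [← pow_mul, pow_succ]
    have key : f0iter c (n+1) z - z ^ 2 ^ (n+1) =
        2 * z ^ 2 ^ n * (f0iter c n z - z ^ 2 ^ n) + (f0iter c n z - z ^ 2 ^ n) ^ 2 + c := by
      have hit : f0iter c (n+1) z = (f0iter c n z) ^ 2 + c := by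
        unfold f0iter; rw [Function.iterate_succ_apply']
      rw [hit]
      linear_combination -hp
    rw [key]
    have e1 : ‖2 * z ^ 2 ^ n * (f0iter c n z - z ^ 2 ^ n)‖ ≤
        2 * a * ‖z‖ ^ (2 ^ (n+1) - 1) := by
      rw [norm_mul, norm_mul, norm_pow]
      have h2 : ‖(2:ℂ)‖ = 2 := by simp
      rw [h2]
      have : ‖z‖ ^ 2 ^ n * (a * ‖z‖ ^ (2 ^ n - 1)) =
          a * ‖z‖ ^ (2 ^ (n+1) - 1) := by
        rw [mul_comm, mul_assoc, ← pow_add]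
        congr 2
        have h1 : 1 ≤ 2 ^ n := Nat.one_le_two_pow
        omega
      calc 2 * ‖z‖ ^ 2 ^ n * ‖f0iter c n z - z ^ 2 ^ n‖
          ≤ 2 * ‖z‖ ^ 2 ^ n * (a * ‖z‖ ^ (2 ^ n - 1)) := by
            have : (0:ℝ) ≤ 2 * ‖z‖ ^ 2 ^ n := by positivity
            nlinarith [he]
        _ = 2 * a * ‖z‖ ^ (2 ^ (n+1) - 1) := by rw [mul_assoc, this]; ring
    have e2 : ‖(f0iter c n z - z ^ 2 ^ n) ^ 2‖ ≤
        a ^ 2 * ‖z‖ ^ (2 ^ (n+1) - 1) := by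
      rw [norm_pow]
      have step1 : ‖f0iter c n z - z ^ 2 ^ n‖ ^ 2 ≤
          (a * ‖z‖ ^ (2 ^ n - 1)) ^ 2 := by
        have hn := norm_nonneg (f0iter c n z - z ^ 2 ^ n)
        nlinarith [he]
      refine step1.trans ?_
      rw [mul_pow, ← pow_mul]
      have hle : ‖z‖ ^ ((2 ^ n - 1) * 2) ≤ ‖z‖ ^ (2 ^ (n+1) - 1) := by
        apply pow_le_pow_right₀ hz
        have h1 : 1 ≤ 2 ^ n := Nat.one_le_two_pow
        omega
      nlinarith [pow_nonneg (le_of_lt hz0) ((2^n - 1) * 2), sq_nonneg a]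
    have e3 : ‖c‖ ≤ ‖c‖ * ‖z‖ ^ (2 ^ (n+1) - 1) := by
      nth_rewrite 1 [← mul_one (‖c‖)]
      have : (1:ℝ) ≤ ‖z‖ ^ (2 ^ (n+1) - 1) := one_le_pow₀ hz
      nlinarith [norm_nonneg c]
    calc ‖2 * z ^ 2 ^ n * (f0iter c n z - z ^ 2 ^ n) +
          (f0iter c n z - z ^ 2 ^ n) ^ 2 + c‖
        ≤ ‖2 * z ^ 2 ^ n * (f0iter c n z - z ^ 2 ^ n)‖ +
          ‖(f0iter c n z - z ^ 2 ^ n) ^ 2‖ + ‖c‖ := by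
          refine (norm_add_le _ _).trans ?_
          gcongr
          exact norm_add_le _ _
      _ ≤ (2 * a + a ^ 2 + ‖c‖) * ‖z‖ ^ (2 ^ (n+1) - 1) := by
          nlinarith [e1, e2, e3]

lemma sum_half_pow_le (m : ℕ) : ∑ j ∈ Finset.Icc 1 m, ((2:ℝ)⁻¹) ^ j ≤ 1 := by
  have key : ∀ m : ℕ, ∑ j ∈ Finset.Icc 1 m, ((2:ℝ)⁻¹) ^ j = 1 - ((2:ℝ)⁻¹) ^ m := by
    intro m
    induction m with
    | zero => simp
    | succ n ih =>
      rw [Finset.sum_Icc_succ_top (by omega : 1 ≤ n + 1), ih]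
      ring
  rw [key]
  have : (0:ℝ) ≤ ((2:ℝ)⁻¹) ^ m := by positivity
  linarith


variable {c : ℂ} {N : ℕ} {R : ℝ}

lemma Rseq_one : Rseq c N R 1 = 2 * R := by rw [Rseq]

lemma Rseq_two_add (m : ℕ) :
    Rseq c N R (m + 2) = sSup ((fun z => ‖fseq c N R (m+1) z‖) ''
      Metric.sphere (0 : ℂ) (2 * Rseq c N R (m + 1))) := by
  rw [Rseq]
  have h : (fun z : ℂ => ‖f0iter c N z *
        ∏ j ∈ (Finset.Icc 1 (m + 1)).attach,
          (1 - (1 / 2) * (z / ((Rseq c N R j.1 : ℝ) : ℂ)) ^ nseq N j.1)‖)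
      = fun z => ‖fseq c N R (m+1) z‖ := by
    funext z
    unfold fseq Fseq
    congr 1
    congr 1
    exact Finset.prod_attach (Finset.Icc 1 (m+1))
      (fun j => (1 - (1 / 2) * ((z : ℂ) / ((Rseq c N R j : ℝ) : ℂ)) ^ nseq N j))
  rw [h]

lemma nseq_ge_two (hN : 2 ≤ N) (k : ℕ) : 2 ≤ nseq N k := by
  unfold nseq
  calc 2 = 2 ^ 1 := rfl
    _ ≤ 2 ^ (N + k - 1) := Nat.pow_le_pow_right (by norm_num) (show 1 ≤ N + k - 1 by omega)

lemma abs_Fseq_le (k : ℕ) (hpos : 0 < Rseq c N R k) (z : ℂ) :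
    ‖Fseq c N R k z‖ ≤ 1 + (1/2) * (‖z‖ / Rseq c N R k) ^ nseq N k := by
  unfold Fseq
  refine (norm_sub_le _ _).trans ?_
  have h1 : ‖(1:ℂ)‖ = 1 := by simp
  have h2 : ‖(1/2 : ℂ) * (z / ((Rseq c N R k : ℝ) : ℂ)) ^ nseq N k‖
      = (1/2) * (‖z‖ / Rseq c N R k) ^ nseq N k := by
    simp only [norm_mul, norm_pow, norm_div, Complex.norm_real, Real.norm_eq_abs, norm_one,
      Complex.norm_two, abs_of_pos hpos]
    try norm_num
  rw [h1, h2]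

lemma ob_lower (hOB : OneBound c N R) {z : ℂ} (hz : R ≤ ‖z‖)
    (hz0 : 0 < ‖z‖) :
    (1/2) * ‖z‖ ^ 2 ^ N ≤ ‖f0iter c N z‖ := by
  have h := (hOB z hz).1
  have hp : (0:ℝ) < ‖z‖ ^ 2 ^ N := by positivity
  rw [le_div_iff₀ hp] at h
  linarith

lemma ob_upper (hOB : OneBound c N R) {z : ℂ} (hz : R ≤ ‖z‖)
    (hz0 : 0 < ‖z‖) :
    ‖f0iter c N z‖ ≤ 2 * ‖z‖ ^ 2 ^ N := by
  have h := (hOB z hz).2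
  have hp : (0:ℝ) < ‖z‖ ^ 2 ^ N := by positivity
  rw [div_le_iff₀ hp] at h
  linarith

/-- key sSup step -/
lemma step (hN : 2 ≤ N) (hOB : OneBound c N R) (hR0 : 0 ≤ R) (k : ℕ) (hk : 1 ≤ k)
    (hfacts : ∀ j, 1 ≤ j → j ≤ k → 2 ≤ Rseq c N R j ∧ Rseq c N R j ≤ Rseq c N R k)
    (hRk : R ≤ Rseq c N R k) :
    Rseq c N R k ^ 2 ^ N ≤ Rseq c N R (k + 1) := by
  obtain ⟨m, rfl⟩ : ∃ m, k = m + 1 := ⟨k - 1, by omega⟩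
  rw [show m + 1 + 1 = m + 2 from rfl, Rseq_two_add]
  set r := Rseq c N R (m + 1) with hr
  have hr2 : 2 ≤ r := (hfacts (m+1) (by omega) (le_refl _)).1
  have hrpos : 0 < r := by linarith
  -- bounded above
  set M : ℝ := 2 * (2 * r) ^ 2 ^ N *
      ∏ j ∈ Finset.Icc 1 (m+1), (1 + (1/2) * (2 * r / Rseq c N R j) ^ nseq N j) with hM
  have hbdd : ∀ x ∈ (fun z => ‖fseq c N R (m+1) z‖) ''
      Metric.sphere (0 : ℂ) (2 * r), x ≤ M := by
    rintro x ⟨z, hz, rfl⟩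
    have hzabs : ‖z‖ = 2 * r := by
      rw [Metric.mem_sphere, Complex.dist_eq, sub_zero] at hz
      exact hz
    have hzR : R ≤ ‖z‖ := by rw [hzabs]; linarith
    have hz0 : 0 < ‖z‖ := by rw [hzabs]; linarith
    show ‖fseq c N R (m+1) z‖ ≤ M
    unfold fseq
    rw [norm_mul]
    have h1 : ‖f0iter c N z‖ ≤ 2 * (2 * r) ^ 2 ^ N := by
      have := ob_upper hOB hzR hz0
      rwa [hzabs] at this
    have h2 : ‖∏ j ∈ Finset.Icc 1 (m+1), Fseq c N R j z‖ ≤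
        ∏ j ∈ Finset.Icc 1 (m+1), (1 + (1/2) * (2 * r / Rseq c N R j) ^ nseq N j) := by
      rw [norm_prod]
      refine Finset.prod_le_prod (fun j _ => norm_nonneg _) (fun j hj => ?_)
      rw [Finset.mem_Icc] at hj
      have hjpos : 0 < Rseq c N R j := by linarith [(hfacts j hj.1 hj.2).1]
      have := abs_Fseq_le j hjpos z
      rwa [hzabs] at this
    calc ‖f0iter c N z‖ * ‖∏ j ∈ Finset.Icc 1 (m+1), Fseq c N R j z‖
        ≤ (2 * (2 * r) ^ 2 ^ N) *
          ∏ j ∈ Finset.Icc 1 (m+1), (1 + (1/2) * (2 * r / Rseq c N R j) ^ nseq N j) := by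
          have hq : (0:ℝ) ≤ ∏ j ∈ Finset.Icc 1 (m+1),
              (1 + (1/2) * (2 * r / Rseq c N R j) ^ nseq N j) := by
            refine Finset.prod_nonneg (fun j hj => ?_)
            rw [Finset.mem_Icc] at hj
            have hjpos : 0 < Rseq c N R j := by linarith [(hfacts j hj.1 hj.2).1]
            positivity
          exact mul_le_mul h1 h2 (norm_nonneg _) (by positivity)
      _ = M := rfl
  -- the witness point
  set z₀ : ℂ := ((2 * r : ℝ) : ℂ) with hz₀
  have hz₀mem : z₀ ∈ Metric.sphere (0 : ℂ) (2 * r) := by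
    rw [Metric.mem_sphere, Complex.dist_eq, sub_zero, Complex.norm_real, Real.norm_eq_abs]
    rw [abs_of_pos (by linarith)]
  have hz₀abs : ‖z₀‖ = 2 * r := by
    rw [hz₀, Complex.norm_real, Real.norm_eq_abs, abs_of_pos (by linarith)]
  -- lower bound at witness
  have hlow : r ^ 2 ^ N ≤ ‖fseq c N R (m+1) z₀‖ := by
    unfold fseq
    rw [norm_mul]
    have h1 : (1/2) * (2 * r) ^ 2 ^ N ≤ ‖f0iter c N z₀‖ := by
      have := ob_lower hOB (by rw [hz₀abs]; linarith) (by rw [hz₀abs]; linarith)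
      rwa [hz₀abs] at this
    have h2 : (1:ℝ) ≤ ‖∏ j ∈ Finset.Icc 1 (m+1), Fseq c N R j z₀‖ := by
      rw [norm_prod]
      have hle := Finset.prod_le_prod (f := fun _ : ℕ => (1:ℝ))
        (g := fun j => ‖Fseq c N R j z₀‖) (s := Finset.Icc 1 (m+1))
        (fun _ _ => by norm_num) ?_
      · simpa using hle
      intro j hj
      show (1:ℝ) ≤ ‖Fseq c N R j z₀‖
      rw [Finset.mem_Icc] at hj
      obtain ⟨hj2, hjle⟩ := hfacts j hj.1 hj.2
      have hjpos : 0 < Rseq c N R j := by linarith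
      have hx4 : (4:ℝ) ≤ (2 * r / Rseq c N R j) ^ nseq N j := by
        have hrat : (2:ℝ) ≤ 2 * r / Rseq c N R j := by
          rw [le_div_iff₀ hjpos]; linarith
        calc (4:ℝ) = 2 ^ 2 := by norm_num
          _ ≤ 2 ^ nseq N j := by
              apply pow_le_pow_right₀ (by norm_num) (nseq_ge_two hN j)
          _ ≤ (2 * r / Rseq c N R j) ^ nseq N j := by
              apply pow_le_pow_left₀ (by norm_num) hrat
      have hFr : Fseq c N R j z₀ = ((1 - (1/2) * (2 * r / Rseq c N R j) ^ nseq N j : ℝ) : ℂ) := by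
        unfold Fseq
        push_cast
        rw [hz₀]
        norm_num
      rw [hFr, Complex.norm_real, Real.norm_eq_abs]
      rw [abs_of_nonpos (by nlinarith)]
      nlinarith
    calc r ^ 2 ^ N ≤ (1/2) * (2 * r) ^ 2 ^ N := by
          rw [mul_pow]
          have h2N : (2:ℝ) ≤ 2 ^ 2 ^ N := by
            calc (2:ℝ) = 2 ^ 1 := by norm_num
              _ ≤ 2 ^ 2 ^ N := by
                  apply pow_le_pow_right₀ (by norm_num) Nat.one_le_two_pow
          have hrp : (0:ℝ) ≤ r ^ 2 ^ N := by positivity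
          nlinarith
      _ ≤ ‖f0iter c N z₀‖ := h1
      _ ≤ ‖f0iter c N z₀‖ * ‖∏ j ∈ Finset.Icc 1 (m+1), Fseq c N R j z₀‖ := by
          nlinarith [norm_nonneg (f0iter c N z₀)]
  refine hlow.trans ?_
  exact le_csSup ⟨M, fun x hx => hbdd x hx⟩ ⟨z₀, hz₀mem, rfl⟩

lemma growth (hN : 2 ≤ N) (hOB : OneBound c N R) (hR2 : 2 ≤ R) : ∀ k, 1 ≤ k →
    (∀ j, 1 ≤ j → j ≤ k → 2 ≤ Rseq c N R j ∧ Rseq c N R j ≤ Rseq c N R k) ∧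
      R ≤ Rseq c N R k ∧ Rseq c N R k ^ 2 ^ N ≤ Rseq c N R (k + 1) := by
  intro k hk
  induction k with
  | zero => omega
  | succ n ih =>
    rcases Nat.eq_or_lt_of_le hk with h1 | h2
    · -- n + 1 = 1
      have hn : n = 0 := by omega
      subst hn
      have hfacts : ∀ j, 1 ≤ j → j ≤ 1 → 2 ≤ Rseq c N R j ∧ Rseq c N R j ≤ Rseq c N R 1 := by
        intro j hj1 hj2
        have : j = 1 := by omega
        subst this
        rw [Rseq_one]
        constructor <;> linarith
      have hR1 : R ≤ Rseq c N R 1 := by rw [Rseq_one]; linarith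
      exact ⟨hfacts, hR1, step hN hOB (by linarith) 1 (le_refl _) hfacts hR1⟩
    · have hn1 : 1 ≤ n := by omega
      obtain ⟨hfacts, hRn, hstep⟩ := ih hn1
      have h2n : 2 ≤ Rseq c N R n := (hfacts n hn1 (le_refl _)).1
      have hmono : Rseq c N R n ≤ Rseq c N R (n + 1) := by
        refine le_trans ?_ hstep
        calc Rseq c N R n = Rseq c N R n ^ 1 := (pow_one _).symm
          _ ≤ Rseq c N R n ^ 2 ^ N := by
              apply pow_le_pow_right₀ (by linarith) Nat.one_le_two_pow
      have hfacts' : ∀ j, 1 ≤ j → j ≤ n + 1 →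
          2 ≤ Rseq c N R j ∧ Rseq c N R j ≤ Rseq c N R (n + 1) := by
        intro j hj1 hj2
        rcases Nat.lt_or_ge j (n + 1) with h | h
        · obtain ⟨ha, hb⟩ := hfacts j hj1 (by omega)
          exact ⟨ha, hb.trans hmono⟩
        · have : j = n + 1 := by omega
          subst this
          exact ⟨by linarith, le_refl _⟩
      have hRn1 : R ≤ Rseq c N R (n + 1) := hRn.trans hmono
      exact ⟨hfacts', hRn1, step hN hOB (by linarith) (n+1) (by omega) hfacts' hRn1⟩

lemma Rseq_mono (hN : 2 ≤ N) (hOB : OneBound c N R) (hR2 : 2 ≤ R) :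
    ∀ a b, 1 ≤ a → a ≤ b → Rseq c N R a ≤ Rseq c N R b := by
  intro a b ha hab
  exact ((growth hN hOB hR2 b (by omega)).1 a ha hab).2


end Aux9

namespace Aux9
variable {c : ℂ} {N : ℕ} {R : ℝ}

lemma nseq_sum (hN : 1 ≤ N) (k : ℕ) :
    ∑ j ∈ Finset.Icc 1 k, nseq N j = 2 ^ (N + k) - 2 ^ N := by
  induction k with
  | zero => simp
  | succ n ih =>
    rw [Finset.sum_Icc_succ_top (by omega : 1 ≤ n + 1), ih]
    have h1 : nseq N (n+1) = 2 ^ (N + n) := by unfold nseq; congr 1 <;> try omega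
    have h2 : (2:ℕ) ^ N ≤ 2 ^ (N + n) := Nat.pow_le_pow_right (by norm_num) (by omega)
    have h3 : (2:ℕ) ^ (N + (n+1)) = 2 * 2 ^ (N + n) := by
      rw [show N + (n+1) = (N + n) + 1 by omega, pow_succ]; try ring
    omega

lemma nseq_tail_ge (hN : 1 ≤ N) {k : ℕ} (hk : 1 ≤ k) (i : ℕ) :
    nseq N k + i + 1 ≤ nseq N (i + k + 1) := by
  unfold nseq
  have h1 : N + (i + k + 1) - 1 = (N + k - 1) + (i + 1) := by omega
  rw [h1, pow_add]
  have h2 : i + 2 ≤ 2 ^ (i + 1) := @Nat.lt_two_pow_self (i + 1)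
  have h3 : 1 ≤ 2 ^ (N + k - 1) := Nat.one_le_two_pow
  nlinarith

lemma nseq_exp_ineq (hN : 2 ≤ N) {j : ℕ} (hj : 1 ≤ j) :
    2 ^ (j - 1) + j + 1 ≤ nseq N j := by
  unfold nseq
  have h1 : j + 1 ≤ 2 ^ j := @Nat.lt_two_pow_self j
  have h2 : (2:ℕ) ^ j = 2 * 2 ^ (j - 1) := by
    rw [← pow_succ']; congr 1; omega
  have h3 : (2:ℕ) ^ (j + 1) ≤ 2 ^ (N + j - 1) := Nat.pow_le_pow_right (by norm_num) (by omega)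
  have h4 : (2:ℕ) ^ (j + 1) = 4 * 2 ^ (j - 1) := by
    rw [show j + 1 = (j - 1) + 2 by omega, pow_add]; try ring
  omega

lemma nseq_eq_mul {j : ℕ} (hj : 1 ≤ j) : nseq N j = 2 ^ N * 2 ^ (j - 1) := by
  unfold nseq; rw [← pow_add]; congr 1; omega

lemma ratio_bound (hN : 2 ≤ N) (hOB : OneBound c N R) (hR2 : 2 ≤ R) {j k : ℕ}
    (hj : 1 ≤ j) (hjk : j < k) {az : ℝ} (haz : Rseq c N R k ≤ az) :
    (Rseq c N R j / az) ^ nseq N j ≤ ((2:ℝ)⁻¹) ^ j * (Rseq c N R k)⁻¹ := by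
  have hk1 : 1 ≤ k := by omega
  have hgj := growth hN hOB hR2 j hj
  have hrj2 : 2 ≤ Rseq c N R j := (hgj.1 j hj le_rfl).1
  have hrk2 : 2 ≤ Rseq c N R k := ((growth hN hOB hR2 k hk1).1 k hk1 le_rfl).1
  have hrjpos : 0 < Rseq c N R j := by linarith
  have hrkpos : 0 < Rseq c N R k := by linarith
  have hazpos : 0 < az := by linarith
  set rj := Rseq c N R j
  set rk := Rseq c N R k
  have hjk' : Rseq c N R (j + 1) ≤ rk := Rseq_mono hN hOB hR2 (j+1) k (by omega) (by omega)
  have hA : rj ^ nseq N j ≤ rk ^ 2 ^ (j - 1) := by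
    have h1 : rj ^ 2 ^ N ≤ rk := le_trans hgj.2.2 hjk'
    calc rj ^ nseq N j = (rj ^ 2 ^ N) ^ 2 ^ (j-1) := by
          rw [← pow_mul, ← nseq_eq_mul hj]
      _ ≤ rk ^ 2 ^ (j-1) := pow_le_pow_left₀ (by positivity) h1 _
  have hB : (2:ℝ) ^ j ≤ rk ^ j := pow_le_pow_left₀ (by norm_num) hrk2 j
  have hC : rk ^ (2^(j-1) + j + 1) ≤ rk ^ nseq N j :=
    pow_le_pow_right₀ (by linarith) (nseq_exp_ineq hN hj)
  have key : rj ^ nseq N j * (2 ^ j * rk) ≤ rk ^ nseq N j := by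
    calc rj ^ nseq N j * (2 ^ j * rk) ≤ rk ^ 2 ^ (j-1) * (rk ^ j * rk) := by
          have hp1 : (0:ℝ) ≤ rj ^ nseq N j := by positivity
          have hp2 : (0:ℝ) ≤ (2:ℝ) ^ j := by positivity
          have hp3 : (0:ℝ) < rk := hrkpos
          have hp4 : (0:ℝ) ≤ rk ^ 2 ^ (j-1) := by positivity
          exact mul_le_mul hA (mul_le_mul_of_nonneg_right hB (le_of_lt hp3))
            (by positivity) hp4
      _ = rk ^ (2^(j-1) + j + 1) := by
          rw [pow_add, pow_add, pow_one]; ring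
      _ ≤ rk ^ nseq N j := hC
  have step1 : (rj / az) ^ nseq N j ≤ (rj / rk) ^ nseq N j := by
    apply pow_le_pow_left₀ (by positivity)
    apply div_le_div_of_nonneg_left (by linarith) hrkpos haz
  refine step1.trans ?_
  rw [div_pow, inv_pow]
  rw [div_le_iff₀ (by positivity)]
  rw [← inv_pow, inv_pow]
  have hrw : ((2:ℝ) ^ j)⁻¹ * rk⁻¹ * rk ^ nseq N j = rk ^ nseq N j / (2 ^ j * rk) := by
    field_simp
  rw [hrw, le_div_iff₀ (by positivity)]
  linarith [key]

end Aux9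

set_option maxHeartbeats 1600000

/-- There are `R₀ > 0` and `C > 0` (depending only on `c`, `N`) such that for `R ≥ R₀`,
every `k ≥ 1` and `z` with `4R_k ≤ |z| ≤ R_{k+1}/4`,
`f(z) = -C_k (z/R_k)^{2n_k} (1 + δ_k(z))` with `|δ_k(z)| ≤ C (R_k⁻¹ + 4^{-n_k})`. -/
theorem stmt9 (c : ℂ) (N : ℕ) (hN : 10 ≤ N) :
    ∃ R₀ : ℝ, 0 < R₀ ∧ ∃ C : ℝ, 0 < C ∧
      ∀ R : ℝ, R₀ ≤ R → OneBound c N R →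
        ∀ k : ℕ, 1 ≤ k → ∀ z : ℂ,
          4 * Rseq c N R k ≤ ‖z‖ → ‖z‖ ≤ Rseq c N R (k + 1) / 4 →
          ∃ δ : ℂ,
            flim c N R z =
              -((Cseq c N R k : ℂ)) * (z / ((Rseq c N R k : ℝ) : ℂ)) ^ (2 * nseq N k) *
                (1 + δ) ∧
            ‖δ‖ ≤ C * ((Rseq c N R k)⁻¹ + ((4 : ℝ) ^ nseq N k)⁻¹) := by
  classical
  obtain ⟨A, hA0, hA⟩ := Aux9.poly_bound c N
  refine ⟨2 * A + 16, by linarith, 3 * A + 9, by linarith, ?_⟩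
  intro R hR hOB k hk z hz1 hz2
  have hN2 : 2 ≤ N := by omega
  have hN1 : 1 ≤ N := by omega
  have hR2 : 2 ≤ R := by linarith
  obtain ⟨hfacts, hRk, hstepk⟩ := Aux9.growth hN2 hOB hR2 k hk
  have hrk2 : 2 ≤ Rseq c N R k := (hfacts k hk le_rfl).1
  have hrkpos : 0 < Rseq c N R k := by linarith
  have habs8 : 8 ≤ ‖z‖ := by linarith
  have hzpos : 0 < ‖z‖ := by linarith
  have hz0 : z ≠ 0 := by
    intro h
    rw [h] at hzpos
    simp at hzpos
  have hz1' : 1 ≤ ‖z‖ := by linarith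
  have hrpos : ∀ j, 1 ≤ j → 0 < Rseq c N R j := by
    intro j hj
    have := ((Aux9.growth hN2 hOB hR2 j hj).1 j hj le_rfl).1
    linarith
  have hrne : ∀ j, 1 ≤ j → ((Rseq c N R j : ℝ) : ℂ) ≠ 0 := by
    intro j hj
    exact Complex.ofReal_ne_zero.2 (ne_of_gt (hrpos j hj))
  have hnk1 : 1 ≤ nseq N k := Nat.one_le_two_pow
  -- η
  have hzpow : z ^ 2 ^ N ≠ 0 := pow_ne_zero _ hz0
  set η : ℂ := f0iter c N z / z ^ 2 ^ N - 1 with hηdef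
  have hηeq : f0iter c N z = z ^ 2 ^ N * (1 + η) := by
    rw [hηdef]; field_simp; ring
  have hηb : ‖η‖ ≤ A / 4 * (Rseq c N R k)⁻¹ := by
    have hη2 : η = (f0iter c N z - z ^ 2 ^ N) / z ^ 2 ^ N := by
      rw [hηdef]; field_simp
    rw [hη2, norm_div, norm_pow]
    have hnum := hA z hz1'
    have hsplit : ‖z‖ ^ 2 ^ N = ‖z‖ ^ (2 ^ N - 1) * ‖z‖ := by
      rw [← pow_succ]
      congr 1
      have : 1 ≤ 2 ^ N := Nat.one_le_two_pow
      omega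
    rw [hsplit, div_le_iff₀ (by positivity)]
    have hrw : A / 4 * (Rseq c N R k)⁻¹ * (‖z‖ ^ (2 ^ N - 1) * ‖z‖) =
        A * ‖z‖ ^ (2 ^ N - 1) * (‖z‖ / (4 * Rseq c N R k)) := by
      field_simp
    rw [hrw]
    have h5 : 1 ≤ ‖z‖ / (4 * Rseq c N R k) := by
      rw [le_div_iff₀ (by positivity)]
      linarith
    have hp : (0:ℝ) ≤ A * ‖z‖ ^ (2 ^ N - 1) := by positivity
    nlinarith [hnum]
  -- tail
  set u : ℕ → ℂ := fun i =>
    -(1/2 : ℂ) * (z / ((Rseq c N R (i + k + 1) : ℝ) : ℂ)) ^ nseq N (i + k + 1) with hu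
  set v : ℕ → ℝ := fun i => (1/2) * ((4:ℝ)⁻¹) ^ nseq N k * ((4:ℝ)⁻¹) ^ (i + 1) with hv
  have hratio : ∀ i : ℕ, ‖z‖ / Rseq c N R (i + k + 1) ≤ 4⁻¹ := by
    intro i
    have hm : Rseq c N R (k+1) ≤ Rseq c N R (i+k+1) :=
      Aux9.Rseq_mono hN2 hOB hR2 (k+1) (i+k+1) (by omega) (by omega)
    have hp := hrpos (i+k+1) (by omega)
    rw [div_le_iff₀ hp]
    have : ‖z‖ ≤ Rseq c N R (i+k+1) / 4 := by linarith
    linarith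
  have hub : ∀ i, ‖u i‖ ≤ v i := by
    intro i
    have hp := hrpos (i+k+1) (by omega)
    have habsu : ‖u i‖ =
        (1/2) * (‖z‖ / Rseq c N R (i+k+1)) ^ nseq N (i+k+1) := by
      rw [hu]
      simp only
      rw [norm_mul, norm_pow, norm_div, Complex.norm_real, Real.norm_eq_abs, abs_of_pos hp]
      have habs2 : ‖-(1/2 : ℂ)‖ = 1/2 := by
        rw [norm_neg, norm_div, norm_one, Complex.norm_two]
      rw [habs2]
    rw [habsu, hv]
    simp only
    have h1 : (‖z‖ / Rseq c N R (i+k+1)) ^ nseq N (i+k+1) ≤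
        ((4:ℝ)⁻¹) ^ nseq N (i+k+1) :=
      pow_le_pow_left₀ (by positivity) (hratio i) _
    have h2 : ((4:ℝ)⁻¹) ^ nseq N (i+k+1) ≤ ((4:ℝ)⁻¹) ^ (nseq N k + i + 1) :=
      pow_le_pow_of_le_one (by norm_num) (by norm_num) (Aux9.nseq_tail_ge hN1 hk i)
    have h3 : ((4:ℝ)⁻¹) ^ (nseq N k + i + 1) = ((4:ℝ)⁻¹) ^ nseq N k * ((4:ℝ)⁻¹) ^ (i+1) := by
      rw [← pow_add]
      congr 1
    linarith
  have hv2 : ∀ i, v i ≤ 1/2 := by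
    intro i
    rw [hv]
    simp only
    have a1 : ((4:ℝ)⁻¹) ^ nseq N k ≤ 1 := pow_le_one₀ (by norm_num) (by norm_num)
    have a2 : ((4:ℝ)⁻¹) ^ (i+1) ≤ 1 := pow_le_one₀ (by norm_num) (by norm_num)
    have a3 : (0:ℝ) ≤ ((4:ℝ)⁻¹) ^ nseq N k := by positivity
    have a4 : (0:ℝ) ≤ ((4:ℝ)⁻¹) ^ (i+1) := by positivity
    nlinarith
  have hveq : v = fun i => ((1/2) * ((4:ℝ)⁻¹) ^ nseq N k * 4⁻¹) * ((4:ℝ)⁻¹) ^ i := by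
    funext i
    rw [hv]
    simp only
    rw [pow_succ]
    ring
  have hvsum : Summable v := by
    rw [hveq]
    exact (summable_geometric_of_lt_one (by norm_num) (by norm_num)).mul_left _
  have htsum : ∑' i, v i ≤ ((4:ℝ)⁻¹) ^ nseq N k := by
    rw [hveq, tsum_mul_left, tsum_geometric_of_lt_one (by norm_num) (by norm_num)]
    have h43 : (1 - (4:ℝ)⁻¹)⁻¹ = 4/3 := by norm_num
    rw [h43]
    have : (0:ℝ) ≤ ((4:ℝ)⁻¹) ^ nseq N k := by positivity
    nlinarith
  obtain ⟨T, hT, hTb⟩ := Aux9.tail_prod u v hub hv2 hvsum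
  have hTb' : ‖T - 1‖ ≤ Real.exp (((4:ℝ)⁻¹) ^ nseq N k) - 1 := by
    refine hTb.trans ?_
    have := Real.exp_le_exp.2 htsum
    linarith
  -- split product
  have heqtail : (fun n => Fseq c N R (n + k + 1) z) = fun i => 1 + u i := by
    funext i
    rw [hu]
    unfold Fseq
    ring
  have hHP : HasProd (fun i => Fseq c N R (i + 1) z)
      ((∏ i ∈ Finset.range k, Fseq c N R (i+1) z) * T) := by
    apply HasProd.prod_range_mul (k := k)
    show HasProd (fun n => Fseq c N R (n + k + 1) z) T
    rw [heqtail]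
    exact hT
  have hflim : flim c N R z =
      f0iter c N z * ((∏ i ∈ Finset.range k, Fseq c N R (i+1) z) * T) := by
    unfold flim
    rw [hHP.tprod_eq]
  have hrange : ∏ i ∈ Finset.range k, Fseq c N R (i+1) z
      = ∏ j ∈ Finset.Icc 1 k, Fseq c N R j z := by
    rw [← Finset.Ico_add_one_right_eq_Icc, Finset.prod_Ico_eq_prod_range]
    exact Finset.prod_congr (by simp) (fun i _ => by rw [add_comm])
  -- finite factorization
  set e : ℕ → ℂ := fun j => -2 * (((Rseq c N R j : ℝ) : ℂ) / z) ^ nseq N j with he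
  have hFactor : ∀ j ∈ Finset.Icc 1 k, Fseq c N R j z =
      (-(1/2:ℂ) * (z / ((Rseq c N R j : ℝ):ℂ)) ^ nseq N j) * (1 + e j) := by
    intro j hj
    rw [Finset.mem_Icc] at hj
    have hrj := hrne j hj.1
    have hXY : (z / ((Rseq c N R j : ℝ):ℂ)) ^ nseq N j *
        (((Rseq c N R j : ℝ):ℂ) / z) ^ nseq N j = 1 := by
      rw [← mul_pow, div_mul_div_comm, mul_comm z, div_self (mul_ne_zero hrj hz0), one_pow]
    unfold Fseq
    rw [he]
    simp only
    linear_combination (-(1:ℂ)) * hXY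
  set Q : ℂ := ∏ j ∈ Finset.Icc 1 k, (1 + e j) with hQ
  set D : ℂ := ∏ j ∈ Finset.Icc 1 k, ((Rseq c N R j:ℝ):ℂ) ^ nseq N j with hD
  have hDne : D ≠ 0 := by
    rw [hD]
    exact Finset.prod_ne_zero_iff.2
      (fun j hj => pow_ne_zero _ (hrne j (Finset.mem_Icc.1 hj).1))
  have hProd : ∏ j ∈ Finset.Icc 1 k, Fseq c N R j z
      = ((-(1/2:ℂ))^k * z ^ (∑ j ∈ Finset.Icc 1 k, nseq N j) / D) * Q := by
    rw [Finset.prod_congr rfl hFactor, Finset.prod_mul_distrib]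
    have h1 : ∏ j ∈ Finset.Icc 1 k, (z / ((Rseq c N R j : ℝ):ℂ)) ^ nseq N j
        = z ^ (∑ j ∈ Finset.Icc 1 k, nseq N j) / D := by
      simp only [div_pow]
      rw [Finset.prod_div_distrib, Finset.prod_pow_eq_pow_sum, hD]
    rw [Finset.prod_mul_distrib, Finset.prod_const, Nat.card_Icc,
      show k + 1 - 1 = k by omega, h1, mul_div_assoc]
  have hsum : 2 ^ N + ∑ j ∈ Finset.Icc 1 k, nseq N j = 2 * nseq N k := by
    rw [Aux9.nseq_sum hN1 k]
    have h1 : (2:ℕ)^N ≤ 2^(N+k) := Nat.pow_le_pow_right (by norm_num) (by omega)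
    have h2 : 2 * nseq N k = 2 ^ (N + k) := by
      unfold nseq
      rw [← pow_succ']
      congr 1
      omega
    omega
  have hflim2 : flim c N R z =
      ((-(1/2:ℂ))^k * z ^ (2 * nseq N k) / D) * ((1 + η) * Q * T) := by
    rw [hflim, hrange, hProd, hηeq]
    have hzz : z ^ 2^N * z ^ (∑ j ∈ Finset.Icc 1 k, nseq N j) = z ^ (2 * nseq N k) := by
      rw [← pow_add, hsum]
    rw [← hzz]
    ring
  -- coefficient identity
  have hks : k - 1 + 1 = k := by omega
  have hDsplit : D = (∏ j ∈ Finset.Icc 1 (k-1), ((Rseq c N R j:ℝ):ℂ) ^ nseq N j) *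
      ((Rseq c N R k:ℝ):ℂ) ^ nseq N k := by
    have h := Finset.prod_Icc_succ_top (show 1 ≤ k - 1 + 1 by omega)
      (fun j => ((Rseq c N R j:ℝ):ℂ) ^ nseq N j)
    rw [hks] at h
    rw [hD, h]
  set D' : ℂ := ∏ j ∈ Finset.Icc 1 (k-1), ((Rseq c N R j:ℝ):ℂ) ^ nseq N j with hD'
  have hD'ne : D' ≠ 0 := by
    rw [hD']
    refine Finset.prod_ne_zero_iff.2 (fun j hj => pow_ne_zero _ (hrne j (Finset.mem_Icc.1 hj).1))
  have hCc : ((Cseq c N R k : ℝ):ℂ) = ((-1:ℂ))^(k-1) * ((Rseq c N R k:ℝ):ℂ) ^ nseq N k /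
      ((2:ℂ)^k * D') := by
    unfold Cseq
    rw [hD']
    push_cast
    norm_num
  have hcoef : -((Cseq c N R k : ℝ):ℂ) * (z / ((Rseq c N R k:ℝ):ℂ)) ^ (2 * nseq N k) =
      (-(1/2:ℂ))^k * z ^ (2 * nseq N k) / D := by
    rw [hCc, hDsplit]
    have hsign : (-(1/2:ℂ))^k = ((-1:ℂ))^(k-1) * (-1) * (1/2)^k := by
      have h1 : (-(1/2:ℂ))^k = (-1)^k * (1/2)^k := by
        rw [← neg_one_mul, mul_pow]
      rw [h1]
      congr 1
      rw [← pow_succ, hks]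
    rw [hsign]
    have h2n : (z / ((Rseq c N R k:ℝ):ℂ)) ^ (2 * nseq N k)
        = z ^ (2 * nseq N k) / (((Rseq c N R k:ℝ):ℂ) ^ nseq N k * ((Rseq c N R k:ℝ):ℂ) ^ nseq N k) := by
      rw [div_pow, ← pow_add, two_mul]
    rw [h2n]
    have hrkne := hrne k hk
    field_simp
    ring_nf
    rw [← mul_pow]; norm_num
  refine ⟨(1 + η) * Q * T - 1, ?_, ?_⟩
  · rw [hflim2, hcoef]
    ring
  · -- the bound
    have hQb : ‖Q - 1‖ ≤
        Real.exp (2 * (Rseq c N R k)⁻¹ + 2 * ((4:ℝ)⁻¹) ^ nseq N k) - 1 := by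
      rw [hQ]
      refine (Aux9.abs_prod_sub_one_le_exp (Finset.Icc 1 k) e).trans ?_
      have hSQ : ∑ j ∈ Finset.Icc 1 k, ‖e j‖ ≤
          2 * (Rseq c N R k)⁻¹ + 2 * ((4:ℝ)⁻¹) ^ nseq N k := by
        have habsj : ∀ j ∈ Finset.Icc 1 k, ‖e j‖ =
            2 * (Rseq c N R j / ‖z‖) ^ nseq N j := by
          intro j hj
          rw [Finset.mem_Icc] at hj
          rw [he]
          simp only
          rw [norm_mul, norm_pow, norm_div, Complex.norm_real, Real.norm_eq_abs, abs_of_pos (hrpos j hj.1)]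
          have habs2 : ‖(-2 : ℂ)‖ = 2 := by
            rw [norm_neg, Complex.norm_two]
          rw [habs2]
        rw [Finset.sum_congr rfl habsj]
        have hsplit := Finset.sum_Icc_succ_top (show 1 ≤ k - 1 + 1 by omega)
          (fun j => 2 * (Rseq c N R j / ‖z‖) ^ nseq N j)
        rw [hks] at hsplit
        rw [hsplit]
        have hlast : 2 * (Rseq c N R k / ‖z‖) ^ nseq N k ≤
            2 * ((4:ℝ)⁻¹) ^ nseq N k := by
          have hr4 : Rseq c N R k / ‖z‖ ≤ 4⁻¹ := by
            rw [div_le_iff₀ hzpos]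
            linarith
          have := pow_le_pow_left₀ (by positivity) hr4 (nseq N k)
          linarith
        have hinit : ∑ j ∈ Finset.Icc 1 (k-1), 2 * (Rseq c N R j / ‖z‖) ^ nseq N j ≤
            2 * (Rseq c N R k)⁻¹ := by
          calc ∑ j ∈ Finset.Icc 1 (k-1), 2 * (Rseq c N R j / ‖z‖) ^ nseq N j
              ≤ ∑ j ∈ Finset.Icc 1 (k-1), 2 * (((2:ℝ)⁻¹)^j * (Rseq c N R k)⁻¹) := by
                refine Finset.sum_le_sum (fun j hj => ?_)
                rw [Finset.mem_Icc] at hj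
                have hrb := Aux9.ratio_bound hN2 hOB hR2 hj.1 (show j < k by omega)
                  (show Rseq c N R k ≤ ‖z‖ by linarith)
                linarith
            _ = 2 * (Rseq c N R k)⁻¹ * ∑ j ∈ Finset.Icc 1 (k-1), ((2:ℝ)⁻¹)^j := by
                rw [Finset.mul_sum]
                exact Finset.sum_congr rfl (fun j _ => by ring)
            _ ≤ 2 * (Rseq c N R k)⁻¹ * 1 := by
                have hgs := Aux9.sum_half_pow_le (k-1)
                have hp : (0:ℝ) ≤ 2 * (Rseq c N R k)⁻¹ := by positivity
                nlinarith
            _ = 2 * (Rseq c N R k)⁻¹ := by ring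
        linarith
      have := Real.exp_le_exp.2 hSQ
      linarith
    have hηexp : ‖(1 + η) - 1‖ ≤ Real.exp (A / 4 * (Rseq c N R k)⁻¹) - 1 := by
      have h1 : (1 + η) - 1 = η := by ring
      rw [h1]
      have h2 := Real.add_one_le_exp (A / 4 * (Rseq c N R k)⁻¹)
      linarith
    have hx0 : (0:ℝ) ≤ A / 4 * (Rseq c N R k)⁻¹ := by positivity
    have hy0 : (0:ℝ) ≤ 2 * (Rseq c N R k)⁻¹ + 2 * ((4:ℝ)⁻¹) ^ nseq N k := by positivity
    have ht0 : (0:ℝ) ≤ ((4:ℝ)⁻¹) ^ nseq N k := by positivity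
    have hc1 := Aux9.exp_combine hx0 hy0 hηexp hQb
    have hc2 := Aux9.exp_combine (by positivity) ht0 hc1 hTb'
    set s : ℝ := A / 4 * (Rseq c N R k)⁻¹ +
        (2 * (Rseq c N R k)⁻¹ + 2 * ((4:ℝ)⁻¹) ^ nseq N k) + ((4:ℝ)⁻¹) ^ nseq N k with hs
    have hδb : ‖(1 + η) * Q * T - 1‖ ≤ Real.exp s - 1 := hc2
    have hs0 : 0 ≤ s := by positivity
    have hs1 : s ≤ 1 := by
      rw [hs]
      have hrk' : 2 * A + 16 ≤ Rseq c N R k := by linarith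
      have h8 : (A / 4 + 2) * (Rseq c N R k)⁻¹ ≤ 1/8 := by
        rw [← div_eq_mul_inv, div_le_iff₀ hrkpos]
        linarith
      have hq4 : ((4:ℝ)⁻¹) ^ nseq N k ≤ 4⁻¹ := by
        calc ((4:ℝ)⁻¹) ^ nseq N k ≤ ((4:ℝ)⁻¹) ^ 1 :=
              pow_le_pow_of_le_one (by norm_num) (by norm_num) hnk1
          _ = 4⁻¹ := pow_one _
      have hrkinv : (0:ℝ) ≤ (Rseq c N R k)⁻¹ := by positivity
      nlinarith
    have h3s := Aux9.exp_sub_one_le hs0 hs1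
    refine (hδb.trans (by linarith : Real.exp s - 1 ≤ 3 * s)).trans ?_
    rw [hs]
    have hq4inv : ((4:ℝ)⁻¹) ^ nseq N k = ((4:ℝ) ^ nseq N k)⁻¹ := inv_pow 4 (nseq N k)
    rw [hq4inv]
    have hrkinv : (0:ℝ) ≤ (Rseq c N R k)⁻¹ := by positivity
    have hq0 : (0:ℝ) ≤ ((4:ℝ) ^ nseq N k)⁻¹ := by positivity
    nlinarith [mul_nonneg hA0 hrkinv, mul_nonneg hA0 hq0]

end
end

section
/- There exist R₀ > 0 and C > 0 (depending only on c and N) such that if R ≥ R₀, then for every integer k ≥ 1 and every z with R_k/4 ≤ |z| ≤ 4R_k/5, one can write f(z) = 2C_k · (z/R_k)^{n_k} · (1 + δ_k(z)) where |δ_k(z)| ≤ C·((4/5)^{n_k} + R_k^{−1}). -/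
open Complex

noncomputable section

open Finset

set_option maxHeartbeats 2000000

/-- product bound: |∏(1+u) - 1| ≤ 2 Σ|u| when Σ|u| ≤ 1/2 -/
lemma prodOneAdd {ι : Type*} (s : Finset ι) (u : ι → ℂ)
    (h : ∑ i ∈ s, ‖(u i)‖ ≤ 1/2) :
    ‖(∏ i ∈ s, (1 + u i) - 1)‖ ≤ 2 * ∑ i ∈ s, ‖(u i)‖ := by
  induction s using Finset.cons_induction with
  | empty => simp
  | cons a s ha ih =>
    rw [Finset.sum_cons] at h ⊢
    rw [Finset.prod_cons]
    have hnn : (0:ℝ) ≤ ∑ i ∈ s, ‖(u i)‖ :=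
      Finset.sum_nonneg fun i _ => norm_nonneg _
    have hs : ∑ i ∈ s, ‖(u i)‖ ≤ 1/2 :=
      le_trans (le_add_of_nonneg_left (norm_nonneg _)) h
    have ih' := ih hs
    have hP : ‖(∏ i ∈ s, (1 + u i))‖ ≤ 2 := by
      calc ‖(∏ i ∈ s, (1 + u i))‖
          = ‖((∏ i ∈ s, (1 + u i) - 1) + 1)‖ := by ring_nf
        _ ≤ ‖(∏ i ∈ s, (1 + u i) - 1)‖ + 1 := by
            simpa using norm_add_le (∏ i ∈ s, (1 + u i) - 1) 1
        _ ≤ 2 * ∑ i ∈ s, ‖(u i)‖ + 1 := by linarith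
        _ ≤ 2 := by linarith
    have key : (1 + u a) * ∏ i ∈ s, (1 + u i) - 1
        = (∏ i ∈ s, (1 + u i) - 1) + u a * ∏ i ∈ s, (1 + u i) := by ring
    rw [key]
    calc ‖((∏ i ∈ s, (1 + u i) - 1) + u a * ∏ i ∈ s, (1 + u i))‖
        ≤ ‖(∏ i ∈ s, (1 + u i) - 1)‖
          + ‖(u a * ∏ i ∈ s, (1 + u i))‖ := norm_add_le _ _
      _ ≤ 2 * ∑ i ∈ s, ‖(u i)‖ + ‖(u a)‖ * 2 := by
          rw [norm_mul]
          have := mul_le_mul_of_nonneg_left hP (norm_nonneg (u a))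
          linarith
      _ ≤ 2 * (‖(u a)‖ + ∑ i ∈ s, ‖(u i)‖) := by ring_nf; linarith

/-- reindex Icc 1 k products to range -/
lemma prodIccRange {M : Type*} [CommMonoid M] (g : ℕ → M) :
    ∀ k : ℕ, ∏ j ∈ Finset.Icc 1 k, g j = ∏ i ∈ Finset.range k, g (i+1)
  | 0 => by simp
  | (k+1) => by
      rw [Finset.prod_Icc_succ_top (Nat.le_add_left 1 k), Finset.prod_range_succ,
        prodIccRange g k]

/-- geometric-type sum bound -/
lemma geomIcc (r : ℝ) (h0 : 0 ≤ r) (h1 : r ≤ 1/2) :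
    ∀ m : ℕ, ∑ j ∈ Finset.Icc 1 m, r ^ j ≤ 2*r - 2*r*r^m
  | 0 => by simp
  | (m+1) => by
      rw [Finset.sum_Icc_succ_top (Nat.le_add_left 1 m)]
      have ih := geomIcc r h0 h1 m
      have hpow : 0 ≤ r ^ m := pow_nonneg h0 m
      have : 2*r*r^(m+1) ≤ r^(m+1) := by
        have : r^(m+1) = r * r^m := by ring
        nlinarith [pow_nonneg h0 (m+1)]
      have hrm1 : r^(m+1) = r * r^m := by ring
      nlinarith

lemma geomIcc' (r : ℝ) (h0 : 0 ≤ r) (h1 : r ≤ 1/2) (m : ℕ) :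
    ∑ j ∈ Finset.Icc 1 m, r ^ j ≤ 2*r := by
  have := geomIcc r h0 h1 m
  nlinarith [pow_nonneg h0 m, mul_nonneg (mul_nonneg (by norm_num : (0:ℝ) ≤ 2) h0) (pow_nonneg h0 m)]

lemma f0_bound (c : ℂ) : ∀ N : ℕ, 1 ≤ N → ∃ B : ℝ, 1 ≤ B ∧ ∀ z : ℂ, 1 ≤ ‖z‖ →
    ‖(f0iter c N z - z ^ 2 ^ N)‖ ≤ B * ‖z‖ ^ (2 ^ N - 2) := by
  intro N hN
  induction N, hN using Nat.le_induction with
  | base =>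
      refine ⟨max 1 (‖c‖), le_max_left _ _, fun z hz => ?_⟩
      have : f0iter c 1 z = z ^ 2 + c := by simp [f0iter]
      rw [this]
      simp only [pow_one]
      have : z ^ 2 + c - z ^ 2 = c := by ring
      rw [this]
      have h2 : (2:ℕ) ^ 1 - 2 = 0 := by norm_num
      norm_num
  | succ N hN ih =>
      obtain ⟨B, hB1, hB⟩ := ih
      refine ⟨2*B + B^2 + ‖c‖, by nlinarith [norm_nonneg c], fun z hz => ?_⟩
      have hstep : f0iter c (N+1) z = (f0iter c N z) ^ 2 + c := by
        simp [f0iter, Function.iterate_succ_apply']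
      set w := f0iter c N z with hw
      set e := w - z ^ 2 ^ N with he
      have hze : w = z ^ 2 ^ N + e := by rw [he]; ring
      have hid : f0iter c (N+1) z - z ^ 2 ^ (N+1) = 2 * z ^ 2 ^ N * e + e ^ 2 + c := by
        have hzz : z ^ 2 ^ (N+1) = (z ^ 2 ^ N) ^ 2 := by
          rw [← pow_mul, pow_succ]
        rw [hstep, hze, hzz]; ring
      have hp2 : 2 ≤ 2 ^ N := by
        calc 2 = 2^1 := by norm_num
        _ ≤ 2^N := Nat.pow_le_pow_right (by norm_num) hN
      have habs_e : ‖e‖ ≤ B * ‖z‖ ^ (2 ^ N - 2) := hB z hz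
      have hz0 : (0:ℝ) ≤ ‖z‖ := norm_nonneg z
      have hzp : ∀ a b : ℕ, a ≤ b → ‖z‖ ^ a ≤ ‖z‖ ^ b :=
        fun a b hab => pow_le_pow_right₀ hz hab
      rw [hid]
      have t1 : ‖(2 * z ^ 2 ^ N * e)‖ ≤ 2 * B * ‖z‖ ^ (2 ^ (N+1) - 2) := by
        rw [norm_mul, norm_mul, norm_pow]
        have h2' : ‖(2:ℂ)‖ = 2 := by norm_num [Complex.norm_two]
        rw [h2']
        have : ‖z‖ ^ 2 ^ N * ‖e‖
            ≤ ‖z‖ ^ 2 ^ N * (B * ‖z‖ ^ (2 ^ N - 2)) :=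
          mul_le_mul_of_nonneg_left habs_e (pow_nonneg hz0 _)
        have hexp : ‖z‖ ^ 2 ^ N * ‖z‖ ^ (2 ^ N - 2)
            = ‖z‖ ^ (2 ^ (N+1) - 2) := by
          rw [← pow_add]; congr 1
          have : (2:ℕ)^(N+1) = 2 * 2^N := by rw [pow_succ]; ring
          omega
        nlinarith [pow_nonneg hz0 (2^N), pow_nonneg hz0 (2^N - 2), norm_nonneg e]
      have t2 : ‖(e ^ 2)‖ ≤ B^2 * ‖z‖ ^ (2 ^ (N+1) - 2) := by
        rw [norm_pow]
        have h1 : ‖e‖ ^ 2 ≤ (B * ‖z‖ ^ (2 ^ N - 2))^2 :=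
          pow_le_pow_left₀ (norm_nonneg e) habs_e 2
        have h2 : (B * ‖z‖ ^ (2 ^ N - 2))^2 = B^2 * ‖z‖ ^ (2*(2 ^ N - 2)) := by
          rw [mul_pow, ← pow_mul, Nat.mul_comm]
        have h3 : ‖z‖ ^ (2*(2 ^ N - 2)) ≤ ‖z‖ ^ (2 ^ (N+1) - 2) := by
          apply hzp
          have : (2:ℕ)^(N+1) = 2 * 2^N := by rw [pow_succ]; ring
          omega
        calc ‖e‖ ^ 2 ≤ B^2 * ‖z‖ ^ (2*(2 ^ N - 2)) := by rw [← h2]; exact h1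
          _ ≤ B^2 * ‖z‖ ^ (2 ^ (N+1) - 2) := by nlinarith
      have t3 : ‖c‖ ≤ ‖c‖ * ‖z‖ ^ (2 ^ (N+1) - 2) := by
        nlinarith [one_le_pow₀ hz (n := 2 ^ (N+1) - 2), norm_nonneg c,
          pow_nonneg hz0 (2 ^ (N+1) - 2)]
      calc ‖(2 * z ^ 2 ^ N * e + e ^ 2 + c)‖
          ≤ ‖(2 * z ^ 2 ^ N * e + e ^ 2)‖ + ‖c‖ := norm_add_le _ _
        _ ≤ ‖(2 * z ^ 2 ^ N * e)‖ + ‖(e ^ 2)‖ + ‖c‖ := by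
            have := norm_add_le (2 * z ^ 2 ^ N * e) (e ^ 2); linarith
        _ ≤ (2*B + B^2 + ‖c‖) * ‖z‖ ^ (2 ^ (N+1) - 2) := by
            nlinarith [pow_nonneg hz0 (2 ^ (N+1) - 2)]

lemma nseq_two (N : ℕ) (hN : 2 ≤ N) (j : ℕ) : 2 ≤ nseq N j := by
  unfold nseq
  have h1 : 1 ≤ N + j - 1 := by omega
  calc (2:ℕ) = 2^1 := by norm_num
  _ ≤ 2^(N + j - 1) := Nat.pow_le_pow_right (by norm_num) h1

lemma Rseq_eq (c : ℂ) (N : ℕ) (R : ℝ) (k : ℕ) :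
    Rseq c N R (k + 2) = sSup ((fun z => ‖(fseq c N R (k+1) z)‖) ''
      Metric.sphere (0 : ℂ) (2 * Rseq c N R (k + 1))) := by
  rw [Rseq]
  have hfun : (fun z => ‖(f0iter c N z *
        ∏ j ∈ (Finset.Icc 1 (k + 1)).attach,
          (1 - (1 / 2) * (z / ((Rseq c N R j.1 : ℝ) : ℂ)) ^ nseq N j.1))‖)
      = (fun z => ‖(fseq c N R (k+1) z)‖) := by
    funext z
    simp only [fseq]
    exact congrArg (fun w : ℂ => ‖w‖) (congrArg (f0iter c N z * ·)
      (Finset.prod_attach (Finset.Icc 1 (k+1)) (fun j => Fseq c N R j z)))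
  rw [hfun]

lemma fseq_cont (c : ℂ) (N : ℕ) (R : ℝ) (m : ℕ) :
    Continuous (fun z => ‖(fseq c N R m z)‖) := by
  apply continuous_norm.comp
  apply Continuous.mul
  · exact (Continuous.iterate (by continuity) N)
  · exact continuous_finset_prod _ (fun j _ => by unfold Fseq; continuity)

lemma Rstep_of (c : ℂ) (N : ℕ) (R : ℝ) (hN : 10 ≤ N) (hR : 2 ≤ R) (hOB : OneBound c N R)
    (k : ℕ) (hk : 1 ≤ k)
    (h : ∀ j, 1 ≤ j → j ≤ k → 2*R ≤ Rseq c N R j ∧ Rseq c N R j ≤ Rseq c N R k) :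
    Rseq c N R k ^ 2 ≤ Rseq c N R (k+1) := by
  obtain ⟨m, rfl⟩ : ∃ m, k = m + 1 := ⟨k - 1, by omega⟩
  set Rk := Rseq c N R (m+1) with hRkdef
  have hRk : 2*R ≤ Rk := (h (m+1) (by omega) le_rfl).1
  have hRk4 : 4 ≤ Rk := by linarith
  have hRkpos : 0 < Rk := by linarith
  set z₀ : ℂ := ((2*Rk : ℝ) : ℂ) with hz₀
  have habsz₀ : ‖z₀‖ = 2*Rk := by
    rw [hz₀, Complex.norm_real, Real.norm_eq_abs, abs_of_pos (by linarith)]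
  have hmem : z₀ ∈ Metric.sphere (0:ℂ) (2*Rk) := by
    simp [Complex.dist_eq, habsz₀]
  have hbdd : BddAbove ((fun z => ‖(fseq c N R (m+1) z)‖) ''
      Metric.sphere (0:ℂ) (2*Rk)) :=
    ((isCompact_sphere (0:ℂ) (2*Rk)).image (fseq_cont c N R (m+1))).bddAbove
  have hle : ‖(fseq c N R (m+1) z₀)‖ ≤ Rseq c N R (m+1+1) := by
    rw [show m+1+1 = m+2 from rfl, Rseq_eq]
    exact le_csSup hbdd ⟨z₀, hmem, rfl⟩
  -- lower bound on |fseq|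
  have hf0 : (1/2) * (2*Rk)^(2^N) ≤ ‖(f0iter c N z₀)‖ := by
    have hz₀R : R ≤ ‖z₀‖ := by rw [habsz₀]; linarith
    have h1 := (hOB z₀ hz₀R).1
    have hpow : (0:ℝ) < ‖z₀‖ ^ (2^N) := pow_pos (by rw [habsz₀]; linarith) _
    rw [le_div_iff₀ hpow] at h1
    calc (1/2) * (2*Rk)^(2^N) = 1/2 * ‖z₀‖ ^ 2^N := by rw [habsz₀]
    _ ≤ ‖(f0iter c N z₀)‖ := h1
  have hF : ∀ j ∈ Finset.Icc 1 (m+1), 1 ≤ ‖(Fseq c N R j z₀)‖ := by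
    intro j hj
    rw [Finset.mem_Icc] at hj
    have hRj := h j hj.1 hj.2
    have hRjpos : 0 < Rseq c N R j := by linarith [hRj.1]
    set w : ℂ := (1/2) * (z₀ / ((Rseq c N R j : ℝ):ℂ)) ^ nseq N j with hw
    have habsw : ‖w‖ = (1/2) * (2*Rk / Rseq c N R j) ^ nseq N j := by
      rw [hw, norm_mul, norm_pow, norm_div, norm_div, habsz₀, norm_one,
        Complex.norm_two, Complex.norm_real, Real.norm_eq_abs, abs_of_pos hRjpos]
    have h2le : (2:ℝ) ≤ 2*Rk / Rseq c N R j := by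
      rw [le_div_iff₀ hRjpos]; linarith [hRj.2]
    have hwge : 2 ≤ ‖w‖ := by
      rw [habsw]
      have h1 : (2:ℝ)^(nseq N j) ≤ (2*Rk / Rseq c N R j) ^ nseq N j :=
        pow_le_pow_left₀ (by norm_num) h2le _
      have h2 : (4:ℝ) ≤ 2^(nseq N j) := by
        calc (4:ℝ) = 2^2 := by norm_num
        _ ≤ 2^(nseq N j) := pow_le_pow_right₀ (by norm_num) (nseq_two N (by omega) j)
      linarith
    have : Fseq c N R j z₀ = 1 - w := rfl
    rw [this]
    have htri : ‖w‖ ≤ ‖(w - 1)‖ + 1 := by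
      calc ‖w‖ = ‖((w - 1) + 1)‖ := by ring_nf
      _ ≤ ‖(w - 1)‖ + ‖(1:ℂ)‖ := norm_add_le _ _
      _ = ‖(w - 1)‖ + 1 := by simp
    have : ‖(1 - w)‖ = ‖(w - 1)‖ := norm_sub_rev 1 w
    rw [this]
    linarith
  have hprod : 1 ≤ ‖(∏ j ∈ Finset.Icc 1 (m+1), Fseq c N R j z₀)‖ := by
    rw [norm_prod]
    calc (1:ℝ) = ∏ j ∈ Finset.Icc 1 (m+1), 1 := by simp
    _ ≤ ∏ j ∈ Finset.Icc 1 (m+1), ‖(Fseq c N R j z₀)‖ :=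
      Finset.prod_le_prod (by intros; norm_num) hF
  have hlow : Rk^2 ≤ ‖(fseq c N R (m+1) z₀)‖ := by
    unfold fseq
    rw [norm_mul]
    have hpow2 : (2*Rk)^2 ≤ (2*Rk)^(2^N) := by
      apply pow_le_pow_right₀ (by linarith)
      calc 2 = 2^1 := by norm_num
      _ ≤ 2^N := Nat.pow_le_pow_right (by norm_num) (by omega)
    have h1 : Rk^2 ≤ (1/2) * (2*Rk)^(2^N) := by nlinarith
    calc Rk^2 ≤ (1/2) * (2*Rk)^(2^N) * 1 := by linarith
    _ ≤ ‖(f0iter c N z₀)‖ * ‖(∏ j ∈ Finset.Icc 1 (m+1), Fseq c N R j z₀)‖ := by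
        apply mul_le_mul hf0 hprod (by norm_num) (norm_nonneg _)
  linarith

lemma Rmain (c : ℂ) (N : ℕ) (R : ℝ) (hN : 10 ≤ N) (hR : 2 ≤ R) (hOB : OneBound c N R) :
    ∀ k, 1 ≤ k → ∀ j, 1 ≤ j → j ≤ k → 2*R ≤ Rseq c N R j ∧ Rseq c N R j ≤ Rseq c N R k := by
  intro k hk
  induction k, hk using Nat.le_induction with
  | base => intro j hj1 hj2; have : j = 1 := by omega
            subst this; exact ⟨by rw [Rseq], le_rfl⟩
  | succ k hk ih =>
      have hstep := Rstep_of c N R hN hR hOB k hk ih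
      have hkR : 2*R ≤ Rseq c N R k := (ih k hk le_rfl).1
      have hmono : Rseq c N R k ≤ Rseq c N R (k+1) := by nlinarith
      intro j hj1 hj2
      rcases Nat.lt_or_ge j (k+1) with hlt | hge
      · have hjk : j ≤ k := by omega
        exact ⟨(ih j hj1 hjk).1, (ih j hj1 hjk).2.trans hmono⟩
      · have : j = k+1 := by omega
        subst this
        exact ⟨by linarith, le_rfl⟩

lemma Rsq (c : ℂ) (N : ℕ) (R : ℝ) (hN : 10 ≤ N) (hR : 2 ≤ R) (hOB : OneBound c N R)
    (k : ℕ) (hk : 1 ≤ k) : Rseq c N R k ^ 2 ≤ Rseq c N R (k+1) :=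
  Rstep_of c N R hN hR hOB k hk (Rmain c N R hN hR hOB k hk)

lemma nsum (N : ℕ) : ∀ m : ℕ, 2^N + ∑ j ∈ Finset.Icc 1 m, nseq N j = nseq N (m+1)
  | 0 => by simp [nseq]
  | (m+1) => by
      rw [Finset.sum_Icc_succ_top (Nat.le_add_left 1 m), ← Nat.add_assoc, nsum N m]
      show nseq N (m+1) + nseq N (m+1) = nseq N (m+2)
      unfold nseq
      have h1 : N + (m+1) - 1 = N + m := by omega
      have h2 : N + (m+2) - 1 = N + m + 1 := by omega
      rw [h1, h2, pow_succ]
      ring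


/-- There are `R₀ > 0` and `C > 0` (depending only on `c`, `N`) such that for `R ≥ R₀`,
every `k ≥ 1` and `z` with `R_k/4 ≤ |z| ≤ 4R_k/5`,
`f(z) = 2C_k (z/R_k)^{n_k} (1 + δ_k(z))` with `|δ_k(z)| ≤ C ((4/5)^{n_k} + R_k⁻¹)`. -/
theorem stmt12 (c : ℂ) (N : ℕ) (hN : 10 ≤ N) :
    ∃ R₀ : ℝ, 0 < R₀ ∧ ∃ C : ℝ, 0 < C ∧
      ∀ R : ℝ, R₀ ≤ R → OneBound c N R →
        ∀ k : ℕ, 1 ≤ k → ∀ z : ℂ,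
          Rseq c N R k / 4 ≤ ‖z‖ → ‖z‖ ≤ 4 * Rseq c N R k / 5 →
          ∃ δ : ℂ,
            flim c N R z =
              2 * (Cseq c N R k : ℂ) * (z / ((Rseq c N R k : ℝ) : ℂ)) ^ nseq N k *
                (1 + δ) ∧
            ‖δ‖ ≤ C * ((4 / 5 : ℝ) ^ nseq N k + (Rseq c N R k)⁻¹) := by
  obtain ⟨B, hB1, hB⟩ := f0_bound c N (by omega)
  refine ⟨32*B + 32, by nlinarith, 8*B + 8, by nlinarith, ?_⟩
  intro R hRge hOB k hk z hz1 hz2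
  obtain ⟨m, rfl⟩ : ∃ m, k = m + 1 := ⟨k - 1, by omega⟩
  have hR2 : (2:ℝ) ≤ R := by nlinarith
  have hRm := Rmain c N R hN hR2 hOB
  have hRsq := Rsq c N R hN hR2 hOB
  set n := nseq N (m+1) with hn
  set Rk := Rseq c N R (m+1) with hRkdef
  have hRkR : 2*R ≤ Rk := (hRm (m+1) (by omega) (m+1) (by omega) le_rfl).1
  have hRkbig : 64*B + 64 ≤ Rk := by nlinarith
  have hRkpos : (0:ℝ) < Rk := by nlinarith
  have hzpos : (0:ℝ) < ‖z‖ := lt_of_lt_of_le (by nlinarith) hz1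
  have hzne : z ≠ 0 := by
    intro h0; rw [h0] at hzpos; simp at hzpos
  have hz1' : (1:ℝ) ≤ ‖z‖ := le_trans (by nlinarith) hz1
  have hRjpos : ∀ j, 1 ≤ j → (0:ℝ) < Rseq c N R j := by
    intro j hj
    have := (hRm j hj j hj le_rfl).1
    nlinarith
  -- numeric facts about a := (4/5)^n
  set a : ℝ := ((4:ℝ)/5)^n with ha
  have hn10 : 10 ≤ n := by
    rw [hn]; unfold nseq
    calc 10 ≤ 2^10 := by norm_num
    _ ≤ 2^(N + (m+1) - 1) := Nat.pow_le_pow_right (by norm_num) (by omega)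
  have ha0 : (0:ℝ) < a := by positivity
  have ha18 : a ≤ 1/8 := by
    calc a ≤ ((4:ℝ)/5)^10 := pow_le_pow_of_le_one (by norm_num) (by norm_num) hn10
    _ ≤ 1/8 := by norm_num
  -- the error terms
  set e0 : ℂ := f0iter c N z / z ^ 2^N - 1 with he0
  set ej : ℕ → ℂ := fun j => -2 * (((Rseq c N R j : ℝ):ℂ) / z) ^ nseq N j with hej
  set eK : ℂ := -(1/2) * (z / ((Rk:ℝ):ℂ)) ^ n with heK
  set T : ℂ := ∏' i : ℕ, Fseq c N R (i + (m+1) + 1) z with hT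
  set v : ℕ → ℂ := fun i => Fseq c N R (i + (m+1) + 1) z - 1 with hv
  -- tail bounds
  have hvbound : ∀ i : ℕ, ‖(v i)‖ ≤ a^(i+2) := by
    intro i
    have hj1 : 1 ≤ i + (m+1) + 1 := by omega
    have hRj := hRjpos _ hj1
    have hmono : Rk ≤ Rseq c N R (i + (m+1) + 1) :=
      (hRm (i + (m+1) + 1) hj1 (m+1) (by omega) (by omega)).2
    have hvi : v i = -(1/2) * (z / ((Rseq c N R (i + (m+1) + 1) : ℝ):ℂ)) ^ nseq N (i + (m+1) + 1) := by
      rw [hv]; show Fseq _ _ _ _ _ - 1 = _; rw [Fseq]; ring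
    have habs : ‖(v i)‖
        = (1/2) * (‖z‖ / Rseq c N R (i + (m+1) + 1)) ^ nseq N (i + (m+1) + 1) := by
      rw [hvi, norm_mul, norm_pow, norm_div, Complex.norm_real, Real.norm_eq_abs, abs_of_pos hRj]
      norm_num
    have hfrac : ‖z‖ / Rseq c N R (i + (m+1) + 1) ≤ 4/5 := by
      rw [div_le_iff₀ hRj]
      calc ‖z‖ ≤ 4 * Rk / 5 := hz2
      _ ≤ 4/5 * Rseq c N R (i + (m+1) + 1) := by linarith
    have hfrac0 : 0 ≤ ‖z‖ / Rseq c N R (i + (m+1) + 1) := by positivity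
    have hnexp : n * (i+2) ≤ nseq N (i + (m+1) + 1) := by
      rw [hn]; unfold nseq
      have h1 : N + (m+1) - 1 = N + m := by omega
      have h2 : N + (i + (m+1) + 1) - 1 = (N + m) + (i+1) := by omega
      rw [h1, h2]
      calc 2^(N+m) * (i+2) ≤ 2^(N+m) * 2^(i+1) :=
            Nat.mul_le_mul_left _ (Nat.succ_le_of_lt ((Nat.lt_two_pow_self (n := i+1))))
      _ = 2^(N+m+(i+1)) := (pow_add 2 (N+m) (i+1)).symm
    calc ‖(v i)‖
        ≤ (1/2) * ((4:ℝ)/5) ^ nseq N (i + (m+1) + 1) := by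
          rw [habs]
          have := pow_le_pow_left₀ hfrac0 hfrac (nseq N (i + (m+1) + 1))
          linarith
      _ ≤ ((4:ℝ)/5) ^ (n * (i+2)) := by
          have := pow_le_pow_of_le_one (by norm_num : (0:ℝ) ≤ 4/5) (by norm_num) hnexp
          nlinarith [pow_nonneg (by norm_num : (0:ℝ) ≤ 4/5) (nseq N (i+(m+1)+1))]
      _ = a^(i+2) := by rw [ha, ← pow_mul]
  have hvbound' : ∀ i : ℕ, ‖(v i)‖ ≤ a^2 * a^i := by
    intro i
    calc ‖(v i)‖ ≤ a^(i+2) := hvbound i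
    _ = a^2 * a^i := by rw [← pow_add]; ring_nf
  have hgsum : Summable (fun i : ℕ => a^2 * a^i) :=
    (summable_geometric_of_lt_one (le_of_lt ha0) (by linarith)).mul_left _
  have hsumv : Summable (fun i => ‖(v i)‖) :=
    Summable.of_nonneg_of_le (fun i => norm_nonneg _) hvbound' hgsum
  have htsumv : ∑' i, ‖(v i)‖ ≤ a/4 := by
    have h1 : ∑' i, ‖(v i)‖ ≤ ∑' i : ℕ, a^2 * a^i :=
      Summable.tsum_le_tsum hvbound' hsumv hgsum
    have h2 : ∑' i : ℕ, a^2 * a^i = a^2 * (1-a)⁻¹ := by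
      rw [tsum_mul_left, tsum_geometric_of_lt_one (le_of_lt ha0) (by linarith)]
    rw [h2] at h1
    have h3 : a^2 * (1-a)⁻¹ ≤ a/4 := by
      rw [← div_eq_mul_inv, div_le_iff₀ (by linarith : (0:ℝ) < 1 - a)]
      nlinarith
    linarith
  have hvhalf : ∀ i : ℕ, ‖(v i)‖ ≤ 1/2 := by
    intro i
    have h2 : a^(i+2) ≤ a^2 := pow_le_pow_of_le_one (le_of_lt ha0) (by linarith) (by omega)
    have := hvbound i
    nlinarith
  -- multipliability of the tail
  have hFform : ∀ i : ℕ, Fseq c N R (i + (m+1) + 1) z = 1 + v i := by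
    intro i; rw [hv]; ring
  have hFne : ∀ i : ℕ, Fseq c N R (i + (m+1) + 1) z ≠ 0 := by
    intro i h0
    rw [hFform i] at h0
    have hvi : v i = -1 := by linear_combination h0
    have h1 : ‖(v i)‖ = 1 := by rw [hvi]; simp
    have h2 := hvhalf i
    rw [h1] at h2
    norm_num at h2
  have hlog : Summable (fun i => Complex.log (Fseq c N R (i + (m+1) + 1) z)) := by
    apply Summable.of_norm_bounded (g := fun i => (3/2) * ‖(v i)‖) (hsumv.mul_left (3/2))
    intro i
    rw [hFform i]
    have := Complex.norm_log_one_add_half_le_self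
      (z := v i) (hvhalf i)
    simpa using this
  have hmul : Multipliable (fun i => Fseq c N R (i + (m+1) + 1) z) :=
    Complex.multipliable_of_summable_log hlog
  -- tail product bound
  have hT1 : ‖(T - 1)‖ ≤ 2 * ∑' i, ‖(v i)‖ := by
    have htend : Filter.Tendsto
        (fun s : Finset ℕ => ‖((∏ i ∈ s, Fseq c N R (i + (m+1) + 1) z) - 1)‖)
        Filter.atTop (nhds (‖(T - 1)‖)) :=
      (continuous_norm.tendsto _).comp (hmul.hasProd.sub_const 1)
    apply le_of_tendsto htend
    apply Filter.Eventually.of_forall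
    intro s
    have hps : ∏ i ∈ s, Fseq c N R (i + (m+1) + 1) z = ∏ i ∈ s, (1 + v i) :=
      Finset.prod_congr rfl (fun i _ => hFform i)
    rw [hps]
    have hsle : ∑ i ∈ s, ‖(v i)‖ ≤ ∑' i, ‖(v i)‖ :=
      Summable.sum_le_tsum s (fun i _ => norm_nonneg _) hsumv
    have h12 : ∑ i ∈ s, ‖(v i)‖ ≤ 1/2 := by linarith
    calc ‖(∏ i ∈ s, (1 + v i) - 1)‖ ≤ 2 * ∑ i ∈ s, ‖(v i)‖ :=
          prodOneAdd s v h12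
      _ ≤ 2 * ∑' i, ‖(v i)‖ := by linarith
  have heT : ‖(T - 1)‖ ≤ a := by
    calc ‖(T - 1)‖ ≤ 2 * ∑' i, ‖(v i)‖ := hT1
    _ ≤ 2 * (a/4) := by linarith
    _ ≤ a := by linarith
  -- splitting the infinite product
  have htp : (∏ i ∈ Finset.range (m+1), Fseq c N R (i+1) z) * T
      = ∏' i : ℕ, Fseq c N R (i+1) z :=
    Multipliable.prod_mul_tprod_nat_mul' (f := fun i => Fseq c N R (i+1) z) (k := m+1) hmul
  -- factorization of finite part
  have hA0 : f0iter c N z = z ^ 2^N * (1 + e0) := by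
    rw [he0]
    have hzp : z ^ 2^N ≠ 0 := pow_ne_zero _ hzne
    field_simp
    ring
  have hfac : ∀ j ∈ Finset.Icc 1 m, Fseq c N R j z
      = (-(1/2) * (z / ((Rseq c N R j : ℝ):ℂ)) ^ nseq N j) * (1 + ej j) := by
    intro j hj
    rw [Finset.mem_Icc] at hj
    have hRj := hRjpos j hj.1
    have hRjne : ((Rseq c N R j : ℝ):ℂ) ≠ 0 := by
      simpa using ne_of_gt hRj
    have hWV : (z / ((Rseq c N R j : ℝ):ℂ))^(nseq N j)
        * (((Rseq c N R j : ℝ):ℂ) / z)^(nseq N j) = 1 := by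
      rw [← mul_pow, div_mul_div_comm, mul_comm z, div_self (by exact mul_ne_zero hRjne hzne),
        one_pow]
    rw [Fseq]
    show 1 - 1/2 * (z / ((Rseq c N R j : ℝ):ℂ)) ^ nseq N j = _
    rw [hej]
    linear_combination -hWV
  have hsplit : ∏ j ∈ Finset.Icc 1 m, Fseq c N R j z
      = (∏ j ∈ Finset.Icc 1 m, (-(1/2) * (z / ((Rseq c N R j : ℝ):ℂ)) ^ nseq N j))
        * ∏ j ∈ Finset.Icc 1 m, (1 + ej j) := by
    rw [← Finset.prod_mul_distrib]
    exact Finset.prod_congr rfl hfac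
  set D : ℂ := ∏ j ∈ Finset.Icc 1 m, ((Rseq c N R j : ℝ):ℂ) ^ nseq N j with hD
  have hDne : D ≠ 0 := by
    rw [hD]
    apply Finset.prod_ne_zero_iff.mpr
    intro j hj
    rw [Finset.mem_Icc] at hj
    exact pow_ne_zero _ (by simpa using ne_of_gt (hRjpos j hj.1))
  have hcoef : ∏ j ∈ Finset.Icc 1 m, (-(1/2) * (z / ((Rseq c N R j : ℝ):ℂ)) ^ nseq N j)
      = (-(1/2):ℂ)^m * z ^ (∑ j ∈ Finset.Icc 1 m, nseq N j) / D := by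
    rw [Finset.prod_mul_distrib, Finset.prod_const, Nat.card_Icc]
    simp only [div_pow]
    rw [Finset.prod_div_distrib, Finset.prod_pow_eq_pow_sum, hD]
    simp only [Nat.add_sub_cancel]
    ring
  have hRkne : ((Rk:ℝ):ℂ) ≠ 0 := by simpa using ne_of_gt hRkpos
  have hCs : ((Cseq c N R (m+1) : ℝ):ℂ)
      = (-1:ℂ)^m * ((Rk:ℝ):ℂ)^n / (2^(m+1) * D) := by
    rw [Cseq]
    simp only [Nat.add_sub_cancel]
    push_cast [Complex.ofReal_prod]
    rw [hD, hRkdef, hn]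
  have hM : z ^ 2^N * ((-(1/2):ℂ)^m * z ^ (∑ j ∈ Finset.Icc 1 m, nseq N j) / D)
      = 2 * ((Cseq c N R (m+1) : ℝ):ℂ) * (z / ((Rk:ℝ):ℂ)) ^ n := by
    rw [hCs]
    have hzn : z ^ 2^N * z ^ (∑ j ∈ Finset.Icc 1 m, nseq N j) = z ^ n := by
      rw [← pow_add, hn]
      congr 1
      exact nsum N m
    have hhalf : (-(1/2):ℂ)^m = (-1:ℂ)^m * ((2:ℂ)^m)⁻¹ := by
      rw [← inv_pow, ← mul_pow]
      norm_num
    have h2m : ((2:ℂ))^(m+1) = 2 * 2^m := by rw [pow_succ]; ring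
    rw [hhalf, h2m, div_pow]
    have h2ne : ((2:ℂ))^m ≠ 0 := pow_ne_zero _ two_ne_zero
    have hRkn : ((Rk:ℝ):ℂ)^n ≠ 0 := pow_ne_zero _ hRkne
    field_simp
    linear_combination hzn
  set P : ℂ := ∏ j ∈ Finset.Icc 1 m, (1 + ej j) with hP
  have hKfac : Fseq c N R (m+1) z = 1 + eK := by
    rw [heK]
    show 1 - 1/2 * (z / ((Rk:ℝ):ℂ)) ^ n = _
    ring
  have hflim2 : flim c N R z
      = (z ^ 2^N * ((-(1/2):ℂ)^m * z ^ (∑ j ∈ Finset.Icc 1 m, nseq N j) / D))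
        * ((1 + e0) * P * (1 + eK) * T) := by
    rw [flim, ← htp, ← prodIccRange (fun j => Fseq c N R j z) (m+1),
      Finset.prod_Icc_succ_top (Nat.le_add_left 1 m), hsplit, hcoef, hKfac, hA0, hP]
    ring
  refine ⟨(1 + e0) * P * (1 + eK) * T - 1, ?_, ?_⟩
  · rw [hflim2, hM]
    ring
  -- now the bound on δ
  · -- individual bounds
    have hb0 : ‖e0‖ ≤ 4*B/Rk := by
      have h1 : e0 = (f0iter c N z - z ^ 2^N) / z ^ 2^N := by
        rw [he0]
        field_simp
      have hpN : 1 ≤ 2^N := Nat.one_le_two_pow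
      have h2 := hB z hz1'
      have h3 : ‖z‖ ^ (2^N - 2) ≤ ‖z‖ ^ (2^N - 1) :=
        pow_le_pow_right₀ hz1' (by omega)
      have h4 : ‖z‖ ^ (2^N - 1) * ‖z‖ = ‖z‖ ^ 2^N := by
        rw [← pow_succ]
        congr 1
        omega
      have hzp : (0:ℝ) < ‖z‖ ^ 2^N := pow_pos hzpos _
      rw [h1, norm_div, norm_pow]
      rw [div_le_div_iff₀ hzp hRkpos]
      have h5 : Rk ≤ 4 * ‖z‖ := by linarith
      calc ‖(f0iter c N z - z ^ 2^N)‖ * Rk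
          ≤ (B * ‖z‖ ^ (2^N - 1)) * (4 * ‖z‖) := by
            apply mul_le_mul (le_trans h2 (by nlinarith)) h5 (by linarith) (by positivity)
        _ = 4*B * (‖z‖ ^ (2^N - 1) * ‖z‖) := by ring
        _ = 4*B * ‖z‖ ^ 2^N := by rw [h4]
    have hbj : ∀ j, 1 ≤ j → j ≤ m → ‖(ej j)‖ ≤ 32/Rk * (1/16)^j := by
      intro j hj1 hj2
      have hm1 : 1 ≤ m := le_trans hj1 hj2
      have hRj := hRjpos j hj1
      have hRjR : 2*R ≤ Rseq c N R j := (hRm j hj1 j hj1 le_rfl).1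
      have hRj64 : 64 ≤ Rseq c N R j := by nlinarith
      have hRjsq : Rseq c N R j ^ 2 ≤ Rk := by
        have h1 : Rseq c N R j ≤ Rseq c N R m := (hRm m hm1 j hj1 hj2).2
        have h2 : Rseq c N R m ^ 2 ≤ Rseq c N R (m+1) := hRsq m hm1
        nlinarith [hRjpos m hm1]
      have habs : ‖(ej j)‖ = 2 * (Rseq c N R j / ‖z‖) ^ nseq N j := by
        rw [hej]
        show ‖(-2 * (((Rseq c N R j : ℝ):ℂ) / z) ^ nseq N j)‖ = _
        rw [norm_mul, norm_pow, norm_div, Complex.norm_real, Real.norm_eq_abs, abs_of_pos hRj]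
        norm_num
      have hq1 : Rseq c N R j / ‖z‖ ≤ 4 * Rseq c N R j / Rk := by
        rw [div_le_div_iff₀ hzpos hRkpos]
        nlinarith
      have hq0 : (0:ℝ) ≤ Rseq c N R j / ‖z‖ := by positivity
      have hq2 : 4 * Rseq c N R j / Rk ≤ 1/16 := by
        rw [div_le_iff₀ hRkpos]
        nlinarith
      have hnj2 : j + 2 ≤ nseq N j := by
        unfold nseq
        have h1 : j + 1 ≤ N + j - 1 := by omega
        calc j + 2 ≤ 2^(j+1) := Nat.succ_le_of_lt ((Nat.lt_two_pow_self (n := j+1)))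
        _ ≤ 2^(N + j - 1) := Nat.pow_le_pow_right (by norm_num) h1
      have hsq : (4 * Rseq c N R j / Rk)^2 ≤ 16/Rk := by
        rw [div_pow, div_le_div_iff₀ (by positivity) hRkpos]
        nlinarith
      calc ‖(ej j)‖ = 2 * (Rseq c N R j / ‖z‖) ^ nseq N j := habs
        _ ≤ 2 * (4 * Rseq c N R j / Rk) ^ nseq N j := by
            have := pow_le_pow_left₀ hq0 hq1 (nseq N j)
            linarith
        _ = 2 * ((4 * Rseq c N R j / Rk)^2 * (4 * Rseq c N R j / Rk) ^ (nseq N j - 2)) := by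
            rw [← pow_add]
            congr 2
            omega
        _ ≤ 2 * ((16/Rk) * (1/16) ^ (nseq N j - 2)) := by
            have hb1 : (0:ℝ) ≤ 4 * Rseq c N R j / Rk := by positivity
            have hp1 : (4 * Rseq c N R j / Rk) ^ (nseq N j - 2) ≤ (1/16) ^ (nseq N j - 2) :=
              pow_le_pow_left₀ hb1 hq2 _
            have hp0 : (0:ℝ) ≤ (4 * Rseq c N R j / Rk) ^ (nseq N j - 2) := by positivity
            have h160 : (0:ℝ) ≤ 16/Rk := by positivity
            nlinarith [pow_nonneg (by norm_num : (0:ℝ) ≤ 1/16) (nseq N j - 2)]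
        _ ≤ 2 * ((16/Rk) * (1/16) ^ j) := by
            have : ((1:ℝ)/16) ^ (nseq N j - 2) ≤ (1/16) ^ j :=
              pow_le_pow_of_le_one (by norm_num) (by norm_num) (by omega)
            have h160 : (0:ℝ) ≤ 16/Rk := by positivity
            nlinarith
        _ = 32/Rk * (1/16)^j := by ring
    have hsumj : ∑ j ∈ Finset.Icc 1 m, ‖(ej j)‖ ≤ 4/Rk := by
      calc ∑ j ∈ Finset.Icc 1 m, ‖(ej j)‖
          ≤ ∑ j ∈ Finset.Icc 1 m, 32/Rk * (1/16:ℝ)^j := by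
            apply Finset.sum_le_sum
            intro j hj
            rw [Finset.mem_Icc] at hj
            exact hbj j hj.1 hj.2
        _ = 32/Rk * ∑ j ∈ Finset.Icc 1 m, (1/16:ℝ)^j := by rw [Finset.mul_sum]
        _ ≤ 32/Rk * (2 * (1/16)) := by
            have := geomIcc' (1/16) (by norm_num) (by norm_num) m
            have h320 : (0:ℝ) ≤ 32/Rk := by positivity
            nlinarith
        _ = 4/Rk := by ring
    have hbK : ‖eK‖ ≤ (1/2) * a := by
      have habs : ‖eK‖ = (1/2) * (‖z‖ / Rk) ^ n := by
        rw [heK]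
        show ‖(-(1/2) * (z / ((Rk:ℝ):ℂ)) ^ n)‖ = _
        rw [norm_mul, norm_pow, norm_div, Complex.norm_real, Real.norm_eq_abs, abs_of_pos hRkpos]
        norm_num
      rw [habs, ha]
      have hfr : ‖z‖ / Rk ≤ 4/5 := by
        rw [div_le_iff₀ hRkpos]; linarith
      have := pow_le_pow_left₀ (by positivity : (0:ℝ) ≤ ‖z‖ / Rk) hfr n
      linarith
    -- assemble via prodOneAdd on an indexed family
    set u : ℕ → ℂ := fun i => if i = 0 then e0 else if i ≤ m then ej i
      else if i = m+1 then eK else (T - 1) with hu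
    have hu0 : u 0 = e0 := by simp [hu]
    have huj : ∀ i, 1 ≤ i → i ≤ m → u i = ej i := by
      intro i h1 h2
      simp only [hu]
      rw [if_neg (by omega : ¬ i = 0), if_pos h2]
    have hu1 : u (m+1) = eK := by
      simp only [hu]
      rw [if_neg (by omega : ¬ m+1 = 0), if_neg (by omega : ¬ m+1 ≤ m)]
      simp
    have hu2 : u (m+2) = T - 1 := by
      simp only [hu]
      rw [if_neg (by omega : ¬ m+2 = 0), if_neg (by omega : ¬ m+2 ≤ m),
        if_neg (by omega : ¬ m+2 = m+1)]
    have hprod_u : ∏ i ∈ Finset.range (m+3), (1 + u i) = (1 + e0) * P * (1 + eK) * T := by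
      have e1 : m+3 = (m+2)+1 := rfl
      rw [e1, Finset.prod_range_succ, hu2]
      have e2 : m+2 = (m+1)+1 := rfl
      rw [e2, Finset.prod_range_succ, hu1]
      rw [Finset.prod_range_succ', hu0]
      have hmid : ∏ i ∈ Finset.range m, (1 + u (i+1)) = P := by
        rw [hP, prodIccRange (fun j => (1 + ej j)) m]
        apply Finset.prod_congr rfl
        intro i hi
        rw [Finset.mem_range] at hi
        rw [huj (i+1) (by omega) (by omega)]
      rw [hmid]
      ring
    have hsum_u : ∑ i ∈ Finset.range (m+3), ‖(u i)‖
        = ‖e0‖ + (∑ j ∈ Finset.Icc 1 m, ‖(ej j)‖)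
          + ‖eK‖ + ‖(T-1)‖ := by
      have e1 : m+3 = (m+2)+1 := rfl
      rw [e1, Finset.sum_range_succ, hu2]
      have e2 : m+2 = (m+1)+1 := rfl
      rw [e2, Finset.sum_range_succ, hu1]
      rw [Finset.sum_range_succ', hu0]
      have hmid : ∑ i ∈ Finset.range m, ‖(u (i+1))‖
          = ∑ j ∈ Finset.Icc 1 m, ‖(ej j)‖ := by
        rw [show (∑ j ∈ Finset.Icc 1 m, ‖(ej j)‖)
            = ∑ i ∈ Finset.range m, ‖(ej (i+1))‖ from
          prodIccRange (M := Multiplicative ℝ) (fun j => ‖(ej j)‖) m]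
        apply Finset.sum_congr rfl
        intro i hi
        rw [Finset.mem_range] at hi
        rw [huj (i+1) (by omega) (by omega)]
      rw [hmid]
      ring
    have hStot : ∑ i ∈ Finset.range (m+3), ‖(u i)‖ ≤ (4*B+4)/Rk + (3/2)*a := by
      rw [hsum_u]
      have : (4:ℝ)*B/Rk + 4/Rk = (4*B+4)/Rk := by ring
      linarith [hb0, hsumj, hbK, heT]
    have hShalf : ∑ i ∈ Finset.range (m+3), ‖(u i)‖ ≤ 1/2 := by
      have h1 : (4*B+4)/Rk ≤ 1/16 := by
        rw [div_le_iff₀ hRkpos]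
        nlinarith
      have h2 : (3/2)*a ≤ 3/16 := by nlinarith
      linarith
    have hfinal := prodOneAdd (Finset.range (m+3)) u hShalf
    rw [hprod_u] at hfinal
    calc ‖((1 + e0) * P * (1 + eK) * T - 1)‖
        ≤ 2 * ∑ i ∈ Finset.range (m+3), ‖(u i)‖ := hfinal
      _ ≤ 2 * ((4*B+4)/Rk + (3/2)*a) := by linarith
      _ = (8*B+8)/Rk + 3*a := by ring
      _ ≤ (8*B+8) * (a + Rk⁻¹) := by
          have h1 : (8*B+8)/Rk = (8*B+8) * Rk⁻¹ := by rw [div_eq_mul_inv]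
          nlinarith

end
end

section
/- There exists R₀ > 0 (depending only on c and N) such that if R ≥ R₀, then for every integer k ≥ 1, every z ∈ B_k, and every integer n ≥ 0, the n-th iterate satisfies f^n(z) ∈ B_{k+n}; in particular |f^n(z)| ≥ 4R_{k+n} for all n, so the iterates f^n tend to infinity uniformly on B_k. -/
open Complex

noncomputable section

/-- The annulus `B_k = {z : 4R_k ≤ |z| ≤ R_{k+1}/4}`. -/
def Bset (c : ℂ) (N : ℕ) (R : ℝ) (k : ℕ) : Set ℂ :=
  {z | 4 * Rseq c N R k ≤ ‖z‖ ∧ ‖z‖ ≤ Rseq c N R (k + 1) / 4}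

namespace Stmt16Aux

open Finset Metric Filter

variable {c : ℂ} {N : ℕ} {R : ℝ}

/-- The total degree `d_k = 2^N + ∑_{j=1}^k n_j`. -/
def dk (N k : ℕ) : ℕ := 2 ^ N + ∑ j ∈ Finset.Icc 1 k, nseq N j

/-- `Π_k = ∏_{j=1}^k R_j^{n_j}`. -/
def Pk (c : ℂ) (N : ℕ) (R : ℝ) (k : ℕ) : ℝ :=
  ∏ j ∈ Finset.Icc 1 k, Rseq c N R j ^ nseq N j

lemma Rseq_one : Rseq c N R 1 = 2 * R := by rw [Rseq]

lemma two_le_nseq (hN : 10 ≤ N) (k : ℕ) : 2 ≤ nseq N k := by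
  have : (2:ℕ)^1 ≤ 2^(N + k - 1) := Nat.pow_le_pow_right (by norm_num) (by omega)
  simpa [nseq] using this

lemma succ_le_nseq (hN : 10 ≤ N) (k : ℕ) : k + 1 ≤ nseq N k := by
  have h := Nat.lt_two_pow_self (n := N + k - 1)
  have : k + 1 ≤ N + k - 1 := by omega
  unfold nseq; omega

lemma dk_succ (k : ℕ) : dk N (k + 1) = dk N k + nseq N (k + 1) := by
  unfold dk
  rw [Finset.sum_Icc_succ_top (by omega : 1 ≤ k + 1)]
  ring

lemma Pk_succ (k : ℕ) :
    Pk c N R (k + 1) = Pk c N R k * Rseq c N R (k + 1) ^ nseq N (k + 1) := by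
  unfold Pk
  rw [Finset.prod_Icc_succ_top (by omega : 1 ≤ k + 1)]

lemma dk_ge (hN : 10 ≤ N) (k : ℕ) : 2 * k + 6 ≤ dk N k := by
  have h1 : (2:ℕ)^10 ≤ 2^N := Nat.pow_le_pow_right (by norm_num) hN
  have h2 : 2 * k = ∑ _j ∈ Finset.Icc 1 k, 2 := by
    rw [Finset.sum_const, Nat.card_Icc, smul_eq_mul]; omega
  have h3 : ∑ _j ∈ Finset.Icc 1 k, 2 ≤ ∑ j ∈ Finset.Icc 1 k, nseq N j :=
    Finset.sum_le_sum fun j _ => two_le_nseq hN j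
  unfold dk
  have : (1024:ℕ) = 2^10 := by norm_num
  omega

lemma Rseq_succ_eq (k : ℕ) (hk : 1 ≤ k) :
    Rseq c N R (k + 1) = sSup ((fun z => ‖fseq c N R k z‖) ''
      Metric.sphere (0 : ℂ) (2 * Rseq c N R k)) := by
  obtain ⟨m, rfl⟩ : ∃ m, k = m + 1 := ⟨k - 1, by omega⟩
  have h : ∀ z : ℂ, (∏ j ∈ (Finset.Icc 1 (m + 1)).attach,
      (1 - (1 / 2) * (z / ((Rseq c N R j.1 : ℝ) : ℂ)) ^ nseq N j.1)) =
      ∏ j ∈ Finset.Icc 1 (m + 1),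
        (1 - (1 / 2) * (z / ((Rseq c N R j : ℝ) : ℂ)) ^ nseq N j) :=
    fun z => Finset.prod_attach (Finset.Icc 1 (m + 1))
      (fun j => (1 - (1 / 2) * (z / ((Rseq c N R j : ℝ) : ℂ)) ^ nseq N j))
  rw [show m + 1 + 1 = m + 2 from rfl, Rseq]
  simp only [h, fseq, Fseq]

lemma continuous_fseq (k : ℕ) : Continuous (fun z => ‖fseq c N R k z‖) := by
  apply continuous_norm.comp
  unfold fseq
  apply Continuous.mul
  · exact Continuous.iterate (by continuity) N
  · apply continuous_finset_prod
    intro j _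
    unfold Fseq
    continuity

lemma sphere_nonempty' (r : ℝ) (hr : 0 ≤ r) : (Metric.sphere (0 : ℂ) r).Nonempty :=
  NormedSpace.sphere_nonempty.mpr hr

lemma abs_eq_of_mem_sphere {z : ℂ} {r : ℝ} (h : z ∈ Metric.sphere (0 : ℂ) r) :
    ‖z‖ = r := by
  simpa using mem_sphere_zero_iff_norm.mp h

lemma le_Rseq_succ (k : ℕ) (hk : 1 ≤ k) {z : ℂ}
    (hz : ‖z‖ = 2 * Rseq c N R k) :
    ‖fseq c N R k z‖ ≤ Rseq c N R (k + 1) := by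
  rw [Rseq_succ_eq k hk]
  apply le_csSup
  · exact ((isCompact_sphere (0 : ℂ) (2 * Rseq c N R k)).image
      (continuous_fseq k)).bddAbove
  · exact ⟨z, by simpa [mem_sphere_zero_iff_norm] using hz, rfl⟩

lemma Rseq_succ_le (k : ℕ) (hk : 1 ≤ k) (hRk : 0 ≤ Rseq c N R k) {M : ℝ}
    (hM : ∀ z : ℂ, ‖z‖ = 2 * Rseq c N R k → ‖fseq c N R k z‖ ≤ M) :
    Rseq c N R (k + 1) ≤ M := by
  rw [Rseq_succ_eq k hk]
  apply csSup_le
  · exact (sphere_nonempty' _ (by positivity)).image _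
  · rintro x ⟨z, hz, rfl⟩
    exact hM z (abs_eq_of_mem_sphere hz)

lemma abs_Fseq_sub_one (k : ℕ) (hRk : 0 ≤ Rseq c N R k) (z : ℂ) :
    ‖Fseq c N R k z - 1‖ =
      (‖z‖ / Rseq c N R k) ^ nseq N k / 2 := by
  have h : Fseq c N R k z - 1 = -((1 / 2) * (z / ((Rseq c N R k : ℝ) : ℂ)) ^ nseq N k) := by
    unfold Fseq; ring
  rw [h, norm_neg, norm_mul, norm_pow, norm_div, norm_div, Complex.norm_real,
    Real.norm_of_nonneg hRk]
  norm_num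
  ring

lemma abs_Fseq_lower (k : ℕ) (hRk : 0 ≤ Rseq c N R k) (z : ℂ) :
    (‖z‖ / Rseq c N R k) ^ nseq N k / 2 - 1 ≤ ‖Fseq c N R k z‖ := by
  have h1 : ‖Fseq c N R k z - 1‖ - ‖-(1:ℂ)‖ ≤
      ‖Fseq c N R k z - 1 - -1‖ := norm_sub_norm_le _ _
  simp only [sub_neg_eq_add, sub_add_cancel, norm_neg, norm_one] at h1
  rw [abs_Fseq_sub_one k hRk] at h1
  linarith

lemma abs_Fseq_upper (k : ℕ) (hRk : 0 ≤ Rseq c N R k) (z : ℂ) :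
    ‖Fseq c N R k z‖ ≤ 1 + (‖z‖ / Rseq c N R k) ^ nseq N k / 2 := by
  have h1 : ‖Fseq c N R k z - 1 + 1‖ ≤
      ‖Fseq c N R k z - 1‖ + ‖(1:ℂ)‖ := norm_add_le _ _
  simp only [sub_add_cancel, norm_one] at h1
  rw [abs_Fseq_sub_one k hRk] at h1
  linarith

lemma abs_Fseq_lower' (k : ℕ) (hRk : 0 ≤ Rseq c N R k) (z : ℂ) :
    1 - (‖z‖ / Rseq c N R k) ^ nseq N k / 2 ≤ ‖Fseq c N R k z‖ := by
  have h1 : ‖(1:ℂ)‖ - ‖1 - Fseq c N R k z‖ ≤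
      ‖1 - (1 - Fseq c N R k z)‖ := norm_sub_norm_le _ _
  simp only [sub_sub_cancel, norm_one] at h1
  have h2 : ‖1 - Fseq c N R k z‖ =
      (‖z‖ / Rseq c N R k) ^ nseq N k / 2 := by
    rw [← abs_Fseq_sub_one k hRk, ← norm_neg, neg_sub]
  rw [h2] at h1
  linarith

/-- The main pointwise bounds for the partial products. -/
lemma fseq_bounds (hN : 10 ≤ N) (hR : 1 ≤ R) (hOB : OneBound c N R) (k : ℕ)
    (hmono : ∀ j, 1 ≤ j → j ≤ k → R ≤ Rseq c N R j) {z : ℂ}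
    (hzR : R ≤ ‖z‖)
    (hz : ∀ j, 1 ≤ j → j ≤ k → 2 * Rseq c N R j ≤ ‖z‖) :
    ‖z‖ ^ dk N k / (2 * 4 ^ k * Pk c N R k) ≤ ‖fseq c N R k z‖ ∧
    ‖fseq c N R k z‖ ≤ 2 * ‖z‖ ^ dk N k / Pk c N R k := by
  induction k with
  | zero =>
    have h0 : fseq c N R 0 z = f0iter c N z := by
      simp [fseq]
    have hOBz := hOB z hzR
    have hzpos : (0:ℝ) < ‖z‖ := lt_of_lt_of_le (by linarith) hzR
    have hp : (0:ℝ) < ‖z‖ ^ 2 ^ N := pow_pos hzpos _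
    have hd : dk N 0 = 2 ^ N := by simp [dk]
    have hP : Pk c N R 0 = 1 := by simp [Pk]
    have hlow := (le_div_iff₀ hp).mp hOBz.1
    have hup := (div_le_iff₀ hp).mp hOBz.2
    constructor
    · rw [h0, hd, hP]
      calc ‖z‖ ^ 2 ^ N / (2 * 4 ^ 0 * 1) = 1 / 2 * ‖z‖ ^ 2 ^ N := by ring
        _ ≤ ‖f0iter c N z‖ := hlow
    · rw [h0, hd, hP]
      calc ‖f0iter c N z‖ ≤ 2 * ‖z‖ ^ 2 ^ N := by linarith
        _ = 2 * ‖z‖ ^ 2 ^ N / 1 := by ring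
  | succ k ih =>
    have hmono' : ∀ j, 1 ≤ j → j ≤ k → R ≤ Rseq c N R j := fun j h1 h2 => hmono j h1 (by omega)
    have hz' : ∀ j, 1 ≤ j → j ≤ k → 2 * Rseq c N R j ≤ ‖z‖ :=
      fun j h1 h2 => hz j h1 (by omega)
    obtain ⟨IH1, IH2⟩ := ih hmono' hz'
    have hR1 : R ≤ Rseq c N R (k + 1) := hmono (k + 1) (by omega) le_rfl
    have hR1pos : (0:ℝ) < Rseq c N R (k + 1) := by linarith
    have hz1 : 2 * Rseq c N R (k + 1) ≤ ‖z‖ := hz (k + 1) (by omega) le_rfl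
    set q : ℝ := ‖z‖ / Rseq c N R (k + 1) with hq_def
    have hq : 2 ≤ q := (le_div_iff₀ hR1pos).mpr (by linarith)
    set n := nseq N (k + 1) with hn_def
    set x : ℝ := q ^ n with hx_def
    have hx4 : 4 ≤ x := by
      calc (4:ℝ) = 2 ^ 2 := by norm_num
        _ ≤ 2 ^ n := pow_le_pow_right₀ (by norm_num) (two_le_nseq hN (k + 1))
        _ ≤ q ^ n := pow_le_pow_left₀ (by norm_num) hq n
    have hFl : x / 4 ≤ ‖Fseq c N R (k + 1) z‖ := by
      have := abs_Fseq_lower (k + 1) (le_of_lt hR1pos) z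
      rw [← hq_def, ← hn_def, ← hx_def] at this
      linarith
    have hFu : ‖Fseq c N R (k + 1) z‖ ≤ x := by
      have := abs_Fseq_upper (k + 1) (le_of_lt hR1pos) z
      rw [← hq_def, ← hn_def, ← hx_def] at this
      linarith
    have hsplit : fseq c N R (k + 1) z = fseq c N R k z * Fseq c N R (k + 1) z := by
      unfold fseq
      rw [Finset.prod_Icc_succ_top (by omega : 1 ≤ k + 1), mul_assoc]
    have habs : ‖fseq c N R (k + 1) z‖ =
        ‖fseq c N R k z‖ * ‖Fseq c N R (k + 1) z‖ := by
      rw [hsplit, norm_mul]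
    have hPk : (0:ℝ) < Pk c N R k := by
      unfold Pk
      apply Finset.prod_pos
      intro j hj
      simp only [Finset.mem_Icc] at hj
      exact pow_pos (by linarith [hmono' j hj.1 hj.2]) _
    have hzpos : (0:ℝ) < ‖z‖ := lt_of_lt_of_le (by linarith) hzR
    have hxq : x = ‖z‖ ^ n / Rseq c N R (k + 1) ^ n := by
      rw [hx_def, hq_def, div_pow]
    constructor
    · calc ‖z‖ ^ dk N (k + 1) / (2 * 4 ^ (k + 1) * Pk c N R (k + 1))
          = (‖z‖ ^ dk N k / (2 * 4 ^ k * Pk c N R k)) * (x / 4) := by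
            rw [dk_succ, Pk_succ, hxq, pow_add]
            field_simp
            ring
        _ ≤ ‖fseq c N R k z‖ * ‖Fseq c N R (k + 1) z‖ := by
            apply mul_le_mul IH1 hFl (by linarith) (norm_nonneg _)
        _ = ‖fseq c N R (k + 1) z‖ := habs.symm
    · calc ‖fseq c N R (k + 1) z‖
          = ‖fseq c N R k z‖ * ‖Fseq c N R (k + 1) z‖ := habs
        _ ≤ (2 * ‖z‖ ^ dk N k / Pk c N R k) * x := by
            apply mul_le_mul IH2 hFu (norm_nonneg _) (by positivity)
        _ = 2 * ‖z‖ ^ dk N (k + 1) / Pk c N R (k + 1) := by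
            rw [dk_succ, Pk_succ, hxq, pow_add]
            field_simp
            ring

lemma Pk_pos (hR : 1 ≤ R) (k : ℕ) (hmono : ∀ j, 1 ≤ j → j ≤ k → R ≤ Rseq c N R j) :
    0 < Pk c N R k := by
  unfold Pk
  apply Finset.prod_pos
  intro j hj
  simp only [Finset.mem_Icc] at hj
  exact pow_pos (by linarith [hmono j hj.1 hj.2]) _

lemma Rseq_succ_upper (hN : 10 ≤ N) (hR : 1 ≤ R) (hOB : OneBound c N R) (k : ℕ)
    (hk : 1 ≤ k) (hmono : ∀ j, 1 ≤ j → j ≤ k → R ≤ Rseq c N R j)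
    (hmono2 : ∀ j, 1 ≤ j → j ≤ k → Rseq c N R j ≤ Rseq c N R k) :
    Rseq c N R (k + 1) ≤ 2 * (2 * Rseq c N R k) ^ dk N k / Pk c N R k := by
  have hRk : R ≤ Rseq c N R k := hmono k hk le_rfl
  apply Rseq_succ_le k hk (by linarith)
  intro z hz
  have hzR : R ≤ ‖z‖ := by rw [hz]; linarith
  have hz' : ∀ j, 1 ≤ j → j ≤ k → 2 * Rseq c N R j ≤ ‖z‖ := by
    intro j h1 h2
    rw [hz]
    have := hmono2 j h1 h2
    linarith
  have h := (fseq_bounds hN hR hOB k hmono hzR hz').2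
  rwa [hz] at h

lemma Rseq_succ_lower (hN : 10 ≤ N) (hR : 1 ≤ R) (hOB : OneBound c N R) (k : ℕ)
    (hk : 1 ≤ k) (hmono : ∀ j, 1 ≤ j → j ≤ k → R ≤ Rseq c N R j)
    (hmono2 : ∀ j, 1 ≤ j → j ≤ k → Rseq c N R j ≤ Rseq c N R k) :
    (2 * Rseq c N R k) ^ dk N k / (2 * 4 ^ k * Pk c N R k) ≤ Rseq c N R (k + 1) := by
  have hRk : R ≤ Rseq c N R k := hmono k hk le_rfl
  obtain ⟨z, hz⟩ := sphere_nonempty' (2 * Rseq c N R k) (by linarith)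
  have hzabs : ‖z‖ = 2 * Rseq c N R k := abs_eq_of_mem_sphere hz
  have hzR : R ≤ ‖z‖ := by rw [hzabs]; linarith
  have hz' : ∀ j, 1 ≤ j → j ≤ k → 2 * Rseq c N R j ≤ ‖z‖ := by
    intro j h1 h2
    rw [hzabs]
    have := hmono2 j h1 h2
    linarith
  have h := (fseq_bounds hN hR hOB k hmono hzR hz').1
  rw [hzabs] at h
  exact le_trans h (le_Rseq_succ k hk hzabs)

/-- `R ≤ R_k` and `16 R_k ≤ R_{k+1}` for all `k ≥ 1`. -/
lemma grand (hN : 10 ≤ N) (hR : 1 ≤ R) (hOB : OneBound c N R) :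
    ∀ k, 1 ≤ k → R ≤ Rseq c N R k ∧ 16 * Rseq c N R k ≤ Rseq c N R (k + 1) := by
  intro k
  induction k using Nat.strong_induction_on with
  | _ k ih =>
    intro hk
    have hRk : R ≤ Rseq c N R k := by
      rcases Nat.lt_or_ge k 2 with h | h
      · interval_cases k
        · rw [Rseq_one]; linarith
      · obtain ⟨m, rfl⟩ : ∃ m, k = m + 1 := ⟨k - 1, by omega⟩
        have h2 := ih m (by omega) (by omega)
        have : (0:ℝ) < Rseq c N R m := by linarith [h2.1]
        nlinarith [h2.1, h2.2]
    have hchain : ∀ d j, 1 ≤ j → j + d ≤ k → Rseq c N R j ≤ Rseq c N R (j + d) := by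
      intro d
      induction d with
      | zero => intro j _ _; simp
      | succ d hd =>
        intro j hj hjd
        have h1 : Rseq c N R j ≤ Rseq c N R (j + d) := hd j hj (by omega)
        have h2 := ih (j + d) (by omega) (by omega)
        have h3 : (0:ℝ) < Rseq c N R (j + d) := by linarith [h2.1]
        have : Rseq c N R (j + d) ≤ Rseq c N R (j + d + 1) := by nlinarith [h2.2]
        calc Rseq c N R j ≤ Rseq c N R (j + d) := h1
          _ ≤ Rseq c N R (j + (d + 1)) := by rw [show j + (d+1) = j + d + 1 by omega]; exact this
    have hmono : ∀ j, 1 ≤ j → j ≤ k → R ≤ Rseq c N R j := by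
      intro j h1 h2
      rcases Nat.lt_or_ge j 2 with h | h
      · interval_cases j
        · rw [Rseq_one]; linarith
      · obtain ⟨m, rfl⟩ : ∃ m, j = m + 1 := ⟨j - 1, by omega⟩
        have h2' := ih m (by omega) (by omega)
        have : (0:ℝ) < Rseq c N R m := by linarith [h2'.1]
        nlinarith [h2'.1, h2'.2]
    have hmono2 : ∀ j, 1 ≤ j → j ≤ k → Rseq c N R j ≤ Rseq c N R k := by
      intro j h1 h2
      have := hchain (k - j) j h1 (by omega)
      rwa [show j + (k - j) = k by omega] at this
    refine ⟨hRk, ?_⟩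
    have hlow := Rseq_succ_lower hN hR hOB k hk hmono hmono2
    -- now show 16 * R_k ≤ lower bound
    have hPk := Pk_pos hR k hmono
    have hRkpos : (0:ℝ) < Rseq c N R k := by linarith
    set s := ∑ j ∈ Finset.Icc 1 k, nseq N j with hs_def
    have hPle : Pk c N R k ≤ Rseq c N R k ^ s := by
      rw [hs_def, ← Finset.prod_pow_eq_pow_sum]
      unfold Pk
      apply Finset.prod_le_prod
      · intro j hj
        simp only [Finset.mem_Icc] at hj
        exact pow_nonneg (by linarith [hmono j hj.1 hj.2]) _
      · intro j hj
        simp only [Finset.mem_Icc] at hj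
        exact pow_le_pow_left₀ (by linarith [hmono j hj.1 hj.2]) (hmono2 j hj.1 hj.2) _
    have hdk : dk N k = 2 ^ N + s := rfl
    have key : 16 * Rseq c N R k ≤ (2 * Rseq c N R k) ^ dk N k / (2 * 4 ^ k * Pk c N R k) := by
      rw [le_div_iff₀ (by positivity)]
      have e1 : (2 * Rseq c N R k) ^ dk N k =
          2 ^ (2 ^ N + s) * (Rseq c N R k ^ 2 ^ N * Rseq c N R k ^ s) := by
        rw [hdk, mul_pow, pow_add]; ring
      rw [e1]
      have h4 : (4:ℝ) ^ k = 2 ^ (2 * k) := by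
        rw [pow_mul]; norm_num
      have hb1 : 16 * Rseq c N R k * (2 * 4 ^ k * Pk c N R k) ≤
          2 ^ (2 * k + 5) * (Rseq c N R k * Rseq c N R k ^ s) := by
        rw [h4]
        have : (16:ℝ) * Rseq c N R k * (2 * 2 ^ (2*k) * Pk c N R k) =
            2 ^ (2*k+5) * (Rseq c N R k * Pk c N R k) := by
          rw [pow_add]; ring
        rw [this]
        apply mul_le_mul_of_nonneg_left _ (by positivity)
        exact mul_le_mul_of_nonneg_left hPle (by linarith)
      refine le_trans hb1 ?_
      have hRk1 : Rseq c N R k ≤ Rseq c N R k ^ 2 ^ N :=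
        le_self_pow₀ (by linarith) (by positivity)
      have hexp : (2:ℝ) ^ (2 * k + 5) ≤ 2 ^ (2 ^ N + s) := by
        apply pow_le_pow_right₀ (by norm_num)
        have := dk_ge hN k
        omega
      calc 2 ^ (2 * k + 5) * (Rseq c N R k * Rseq c N R k ^ s)
          ≤ 2 ^ (2 ^ N + s) * (Rseq c N R k * Rseq c N R k ^ s) := by
            apply mul_le_mul_of_nonneg_right hexp (by positivity)
        _ ≤ 2 ^ (2 ^ N + s) * (Rseq c N R k ^ 2 ^ N * Rseq c N R k ^ s) := by
            apply mul_le_mul_of_nonneg_left _ (by positivity)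
            exact mul_le_mul_of_nonneg_right hRk1 (by positivity)
    linarith

/-- Monotonicity of `Rseq` on indices `≥ 1`. -/
lemma Rseq_mono (hN : 10 ≤ N) (hR : 1 ≤ R) (hOB : OneBound c N R) :
    ∀ j k, 1 ≤ j → j ≤ k → Rseq c N R j ≤ Rseq c N R k := by
  have hstep : ∀ m, 1 ≤ m → Rseq c N R m ≤ Rseq c N R (m + 1) := by
    intro m hm
    have h := grand hN hR hOB m hm
    nlinarith [h.1, h.2]
  intro j k hj hjk
  induction k with
  | zero => omega
  | succ k ihk =>
    rcases Nat.lt_or_ge j (k + 1) with h | h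
    · have h1 := ihk (by omega)
      have h2 := hstep k (by omega)
      linarith
    · have : j = k + 1 := by omega
      rw [this]

lemma prod_lb (ε : ℕ → ℝ) (h0 : ∀ i, 0 ≤ ε i) (h1 : ∀ i, ε i ≤ 1) (m : ℕ) :
    1 - ∑ i ∈ Finset.range m, ε i ≤ ∏ i ∈ Finset.range m, (1 - ε i) := by
  induction m with
  | zero => simp
  | succ m ih =>
    rw [Finset.sum_range_succ, Finset.prod_range_succ]
    have hs : 0 ≤ ∑ i ∈ Finset.range m, ε i := Finset.sum_nonneg fun i _ => h0 i
    nlinarith [h0 m, h1 m, ih]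

lemma prod_ub (ε : ℕ → ℝ) (h0 : ∀ i, 0 ≤ ε i)
    (hs : ∀ m, ∑ i ∈ Finset.range m, ε i ≤ 1 / 2) (m : ℕ) :
    ∏ i ∈ Finset.range m, (1 + ε i) ≤ 1 + 2 * ∑ i ∈ Finset.range m, ε i := by
  induction m with
  | zero => simp
  | succ m ih =>
    rw [Finset.sum_range_succ, Finset.prod_range_succ]
    have hsm : ∑ i ∈ Finset.range m, ε i ≤ 1 / 2 := hs m
    have hs0 : 0 ≤ ∑ i ∈ Finset.range m, ε i := Finset.sum_nonneg fun i _ => h0 i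
    have hp : 0 ≤ ∏ i ∈ Finset.range m, (1 + ε i) :=
      Finset.prod_nonneg fun i _ => by linarith [h0 i]
    nlinarith [h0 m, ih]

lemma geom_tail_sum (m : ℕ) :
    ∑ i ∈ Finset.range m, (1 / 2 : ℝ) * (1 / 4) ^ (i + 1) ≤ 1 / 6 := by
  have h1 : ∀ i, (1 / 2 : ℝ) * (1 / 4) ^ (i + 1) = (1 / 8) * (1 / 4) ^ i := by
    intro i; rw [pow_succ]; ring
  simp only [h1]
  rw [← Finset.mul_sum]
  have h2 : ∑ i ∈ Finset.range m, (1 / 4 : ℝ) ^ i ≤ 4 / 3 := by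
    have hsummable : Summable fun i : ℕ => (1/4 : ℝ) ^ i :=
      summable_geometric_of_lt_one (by norm_num) (by norm_num)
    have h3 := Summable.sum_le_tsum (Finset.range m) (fun i _ => by positivity) hsummable
    rw [tsum_geometric_of_lt_one (by norm_num) (by norm_num)] at h3
    norm_num at h3
    linarith
  nlinarith

/-- Quantitative control on products of terms close to 1. -/
lemma tail_lemma (g : ℕ → ℂ)
    (hg : ∀ i, ‖g i - 1‖ ≤ (1 / 2) * (1 / 4) ^ (i + 1)) :
    Multipliable g ∧ 1 / 2 ≤ ‖∏' i, g i‖ ∧ ‖∏' i, g i‖ ≤ 2 := by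
  set ε : ℕ → ℝ := fun i => ‖g i - 1‖ with hε_def
  have hε0 : ∀ i, 0 ≤ ε i := fun i => norm_nonneg _
  have hε1 : ∀ i, ε i ≤ 1 / 8 := by
    intro i
    calc ε i ≤ (1 / 2) * (1 / 4) ^ (i + 1) := hg i
      _ ≤ (1 / 2) * (1 / 4) ^ 1 := by
          apply mul_le_mul_of_nonneg_left _ (by norm_num)
          exact pow_le_pow_of_le_one (by norm_num) (by norm_num) (by omega)
      _ = 1 / 8 := by norm_num
  have hsum : ∀ m, ∑ i ∈ Finset.range m, ε i ≤ 1 / 6 := by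
    intro m
    calc ∑ i ∈ Finset.range m, ε i ≤ ∑ i ∈ Finset.range m, (1/2:ℝ) * (1/4)^(i+1) :=
          Finset.sum_le_sum fun i _ => hg i
      _ ≤ 1 / 6 := geom_tail_sum m
  have hglb : ∀ i, 1 - ε i ≤ ‖g i‖ := by
    intro i
    have h := norm_sub_norm_le (1 : ℂ) (1 - g i)
    simp only [sub_sub_cancel, norm_one] at h
    have : ‖1 - g i‖ = ε i := by rw [hε_def, ← norm_neg, neg_sub]
    linarith [h, this.le, this.ge]
  have hgub : ∀ i, ‖g i‖ ≤ 1 + ε i := by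
    intro i
    have h := norm_add_le (g i - 1) 1
    simp only [sub_add_cancel, norm_one] at h
    linarith
  have hne : ∀ i, g i ≠ 0 := by
    intro i hzero
    have := hglb i
    rw [hzero] at this
    simp at this
    linarith [hε1 i]
  -- multipliability via logs
  have hlog : Summable fun i => Complex.log (g i) := by
    refine Summable.of_norm_bounded (g := fun i => (3/2) * ((1/2) * (1/4)^(i+1))) ?_ ?_
    swap
    · intro i
      have h1 : ‖g i - 1‖ ≤ 1 / 2 := by
        linarith [hε1 i]
      have := Complex.norm_log_one_add_half_le_self (z := g i - 1) h1
      rw [show (1 : ℂ) + (g i - 1) = g i by ring] at this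
      calc ‖Complex.log (g i)‖ ≤ 3/2 * ‖g i - 1‖ := this
        _ ≤ 3/2 * ((1/2) * (1/4)^(i+1)) := by
            apply mul_le_mul_of_nonneg_left _ (by norm_num)
            exact hg i
    · apply Summable.mul_left
      apply Summable.mul_left
      have : Summable fun i : ℕ => (1/4 : ℝ) ^ i := summable_geometric_of_lt_one (by norm_num) (by norm_num)
      exact (summable_nat_add_iff 1).mpr this
  have hmult : Multipliable g := by
    have := Complex.multipliable_of_summable_log hlog
    exact this
  refine ⟨hmult, ?_, ?_⟩
  · -- lower bound
    have htend : Filter.Tendsto (fun m => ‖∏ i ∈ Finset.range m, g i‖)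
        Filter.atTop (nhds (‖∏' i, g i‖)) :=
      (continuous_norm.tendsto _).comp hmult.hasProd.tendsto_prod_nat
    apply ge_of_tendsto' htend
    intro m
    have h1 : ∏ i ∈ Finset.range m, (1 - ε i) ≤ ∏ i ∈ Finset.range m, ‖g i‖ := by
      apply Finset.prod_le_prod
      · intro i _; linarith [hε1 i]
      · intro i _; exact hglb i
    have h2 := prod_lb ε hε0 (fun i => by linarith [hε1 i]) m
    rw [norm_prod]
    calc (1/2 : ℝ) ≤ 1 - ∑ i ∈ Finset.range m, ε i := by linarith [hsum m]
      _ ≤ ∏ i ∈ Finset.range m, (1 - ε i) := h2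
      _ ≤ ∏ i ∈ Finset.range m, ‖g i‖ := h1
  · have htend : Filter.Tendsto (fun m => ‖∏ i ∈ Finset.range m, g i‖)
        Filter.atTop (nhds (‖∏' i, g i‖)) :=
      (continuous_norm.tendsto _).comp hmult.hasProd.tendsto_prod_nat
    apply le_of_tendsto' htend
    intro m
    have h1 : ∏ i ∈ Finset.range m, ‖g i‖ ≤ ∏ i ∈ Finset.range m, (1 + ε i) := by
      apply Finset.prod_le_prod
      · intro i _; exact norm_nonneg _
      · intro i _; exact hgub i
    have h2 := prod_ub ε hε0 (fun m' => by linarith [hsum m']) m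
    rw [norm_prod]
    calc ∏ i ∈ Finset.range m, ‖g i‖ ≤ ∏ i ∈ Finset.range m, (1 + ε i) := h1
      _ ≤ 1 + 2 * ∑ i ∈ Finset.range m, ε i := h2
      _ ≤ 2 := by linarith [hsum m]

lemma prod_Icc_range (f : ℕ → ℂ) (k : ℕ) :
    ∏ j ∈ Finset.Icc 1 k, f j = ∏ i ∈ Finset.range k, f (i + 1) := by
  induction k with
  | zero => simp
  | succ k ih =>
    rw [Finset.prod_Icc_succ_top (by omega : 1 ≤ k + 1), Finset.prod_range_succ, ih]

lemma pow2_le {m m' : ℕ} (h : m ≤ m') : (2:ℝ) ^ m ≤ 2 ^ m' :=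
  pow_le_pow_right₀ (by norm_num) h

lemma four_pow (k : ℕ) : (4:ℝ) ^ k = 2 ^ (2 * k) := by
  rw [show (4:ℝ) = 2 ^ 2 by norm_num, ← pow_mul]

lemma tail_bound_eps (hN : 10 ≤ N) (hR : 1 ≤ R) (hOB : OneBound c N R) (k : ℕ)
    (hk : 1 ≤ k) {z : ℂ} (hz : ‖z‖ ≤ Rseq c N R (k + 1) / 4) :
    ∀ i, ‖Fseq c N R (i + k + 1) z - 1‖ ≤ (1 / 2) * (1 / 4) ^ (i + 1) := by
  intro i
  have hR1 : R ≤ Rseq c N R (i + k + 1) := (grand hN hR hOB (i + k + 1) (by omega)).1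
  have hRpos : (0:ℝ) < Rseq c N R (i + k + 1) := by linarith
  rw [abs_Fseq_sub_one (i + k + 1) (le_of_lt hRpos)]
  have hmono := Rseq_mono hN hR hOB (k + 1) (i + k + 1) (by omega) (by omega)
  have hfrac : ‖z‖ / Rseq c N R (i + k + 1) ≤ 1 / 4 := by
    rw [div_le_div_iff₀ hRpos (by norm_num)]
    calc ‖z‖ * 4 ≤ (Rseq c N R (k + 1) / 4) * 4 := by linarith
      _ = Rseq c N R (k + 1) := by ring
      _ ≤ Rseq c N R (i + k + 1) := hmono
      _ = 1 * Rseq c N R (i + k + 1) := (one_mul _).symm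
  have hfrac0 : 0 ≤ ‖z‖ / Rseq c N R (i + k + 1) := by positivity
  have hn : i + 1 ≤ nseq N (i + k + 1) := by
    have := succ_le_nseq hN (i + k + 1)
    omega
  have h1 : (‖z‖ / Rseq c N R (i + k + 1)) ^ nseq N (i + k + 1) ≤
      (1 / 4 : ℝ) ^ nseq N (i + k + 1) := pow_le_pow_left₀ hfrac0 hfrac _
  have h2 : (1 / 4 : ℝ) ^ nseq N (i + k + 1) ≤ (1 / 4) ^ (i + 1) :=
    pow_le_pow_of_le_one (by norm_num) (by norm_num) hn
  calc (‖z‖ / Rseq c N R (i + k + 1)) ^ nseq N (i + k + 1) / 2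
      ≤ (1 / 4 : ℝ) ^ (i + 1) / 2 := by linarith
    _ = (1 / 2) * (1 / 4) ^ (i + 1) := by ring

lemma flim_split (hN : 10 ≤ N) (hR : 1 ≤ R) (hOB : OneBound c N R) (k : ℕ)
    (hk : 1 ≤ k) {z : ℂ} (hz : ‖z‖ ≤ Rseq c N R (k + 1) / 4) :
    ∃ T : ℂ, flim c N R z = fseq c N R k z * T ∧
      1 / 2 ≤ ‖T‖ ∧ ‖T‖ ≤ 2 := by
  obtain ⟨hmult, hTl, hTu⟩ := tail_lemma (fun i => Fseq c N R (i + k + 1) z)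
    (tail_bound_eps hN hR hOB k hk hz)
  refine ⟨∏' i, Fseq c N R (i + k + 1) z, ?_, hTl, hTu⟩
  have hsplit := Multipliable.prod_mul_tprod_nat_mul'
    (f := fun i => Fseq c N R (i + 1) z) (k := k) hmult
  unfold flim fseq
  rw [← hsplit, prod_Icc_range (fun j => Fseq c N R j z) k, mul_assoc]

lemma step_main (hN : 10 ≤ N) (hR : 1 ≤ R) (hOB : OneBound c N R) (k : ℕ)
    (hk : 1 ≤ k) {z : ℂ} (hz : z ∈ Bset c N R k) :
    flim c N R z ∈ Bset c N R (k + 1) := by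
  obtain ⟨hz1, hz2⟩ := hz
  have hgrand := grand hN hR hOB
  have hmono : ∀ j, 1 ≤ j → j ≤ k → R ≤ Rseq c N R j := fun j h1 _ => (hgrand j h1).1
  have hmono2 : ∀ j, 1 ≤ j → j ≤ k → Rseq c N R j ≤ Rseq c N R k :=
    fun j h1 h2 => Rseq_mono hN hR hOB j k h1 h2
  have hRk : R ≤ Rseq c N R k := (hgrand k hk).1
  have hRkpos : (0:ℝ) < Rseq c N R k := by linarith
  have hzR : R ≤ ‖z‖ := by linarith
  have hz' : ∀ j, 1 ≤ j → j ≤ k → 2 * Rseq c N R j ≤ ‖z‖ := by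
    intro j h1 h2
    have := hmono2 j h1 h2
    linarith
  obtain ⟨hfl, hfu⟩ := fseq_bounds hN hR hOB k hmono hzR hz'
  obtain ⟨T, hTeq, hTl, hTu⟩ := flim_split hN hR hOB k hk hz2
  have habs : ‖flim c N R z‖ =
      ‖fseq c N R k z‖ * ‖T‖ := by rw [hTeq, norm_mul]
  have hPk : (0:ℝ) < Pk c N R k := Pk_pos hR k hmono
  set a := Rseq c N R k with ha_def
  set b := Rseq c N R (k + 1) with hb_def
  set d := dk N k with hd_def
  set P := Pk c N R k with hP_def
  have hbR : R ≤ b := (hgrand (k + 1) (by omega)).1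
  have hbpos : (0:ℝ) < b := by linarith
  have hd_ge : 2 * k + 6 ≤ d := dk_ge hN k
  have hup : b ≤ 2 * (2 * a) ^ d / P :=
    Rseq_succ_upper hN hR hOB k hk hmono hmono2
  have hDpos : (0:ℝ) < (2 * a) ^ d := by positivity
  constructor
  · -- lower bound : 4 * b ≤ |flim z|
    show 4 * Rseq c N R (k + 1) ≤ ‖flim c N R z‖
    have hpow : (4 * a) ^ d ≤ ‖z‖ ^ d :=
      pow_le_pow_left₀ (by positivity) hz1 d
    have h1 : (4 * a) ^ d / (2 * 4 ^ k * P) ≤ ‖fseq c N R k z‖ :=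
      le_trans ((div_le_div_iff_of_pos_right (by positivity)).mpr hpow) hfl
    have h2 : ((4 * a) ^ d / (2 * 4 ^ k * P)) * (1 / 2) ≤ ‖flim c N R z‖ := by
      rw [habs]
      exact mul_le_mul h1 hTl (by norm_num) (norm_nonneg _)
    have h3 : 4 * b ≤ ((4 * a) ^ d / (2 * 4 ^ k * P)) * (1 / 2) := by
      have e1 : ((4 * a) ^ d / (2 * 4 ^ k * P)) * (1 / 2) =
          (2:ℝ) ^ d * (2 * a) ^ d / (4 * 4 ^ k * P) := by
        rw [show (4:ℝ) * a = 2 * (2 * a) by ring, mul_pow]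
        field_simp
        ring
      rw [e1]
      have h4 : 4 * b ≤ 8 * (2 * a) ^ d / P := by
        have e2 : (8:ℝ) * (2 * a) ^ d / P = 4 * (2 * (2 * a) ^ d / P) := by ring
        rw [e2]
        linarith
      refine le_trans h4 ?_
      rw [div_le_div_iff₀ hPk (by positivity)]
      calc 8 * (2 * a) ^ d * (4 * 4 ^ k * P)
          = 2 ^ (2 * k + 5) * ((2 * a) ^ d * P) := by rw [four_pow k, pow_add]; ring
        _ ≤ 2 ^ d * ((2 * a) ^ d * P) :=
            mul_le_mul_of_nonneg_right (pow2_le (by omega)) (by positivity)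
        _ = 2 ^ d * (2 * a) ^ d * P := by ring
    linarith
  · -- upper bound : |flim z| ≤ R_{k+2} / 4
    show ‖flim c N R z‖ ≤ Rseq c N R (k + 1 + 1) / 4
    set n := nseq N (k + 1) with hn_def
    have hn2 : 2 ≤ n := two_le_nseq hN (k + 1)
    have hmono' : ∀ j, 1 ≤ j → j ≤ k + 1 → R ≤ Rseq c N R j :=
      fun j h1 _ => (hgrand j h1).1
    have hmono2' : ∀ j, 1 ≤ j → j ≤ k + 1 → Rseq c N R j ≤ Rseq c N R (k + 1) :=
      fun j h1 h2 => Rseq_mono hN hR hOB j (k + 1) h1 h2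
    have hlow2 := Rseq_succ_lower hN hR hOB (k + 1) (by omega) hmono' hmono2'
    rw [dk_succ, Pk_succ, ← hn_def, ← hd_def, ← hP_def, ← hb_def] at hlow2
    have hpow : ‖z‖ ^ d ≤ (b / 4) ^ d :=
      pow_le_pow_left₀ (norm_nonneg _) hz2 d
    have hfu' : ‖fseq c N R k z‖ ≤ 2 * (b / 4) ^ d / P := by
      refine le_trans hfu ?_
      rw [div_le_div_iff₀ hPk hPk]
      have : (0:ℝ) ≤ P := le_of_lt hPk
      nlinarith [hpow]
    have h5 : ‖flim c N R z‖ ≤ (2 * (b / 4) ^ d / P) * 2 := by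
      rw [habs]
      exact mul_le_mul hfu' hTu (norm_nonneg _) (by positivity)
    have h6 : (2 * (b / 4) ^ d / P) * 2 ≤
        ((2 * b) ^ (d + n) / (2 * 4 ^ (k + 1) * (P * b ^ n))) / 4 := by
      have e3 : (2 * (b / 4) ^ d / P) * 2 = 4 * b ^ d / (4 ^ d * P) := by
        rw [div_pow]
        field_simp
        ring
      have e4 : ((2 * b) ^ (d + n) / (2 * 4 ^ (k + 1) * (P * b ^ n))) / 4 =
          2 ^ (d + n) * b ^ (d + n) / (8 * 4 ^ (k + 1) * P * b ^ n) := by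
        rw [mul_pow]
        field_simp
        ring
      rw [e3, e4, div_le_div_iff₀ (by positivity) (by positivity)]
      calc 4 * b ^ d * (8 * 4 ^ (k + 1) * P * b ^ n)
          = 2 ^ (2 * (k + 1) + 5) * (b ^ d * b ^ n * P) := by
            rw [four_pow (k + 1), pow_add]; ring
        _ ≤ 2 ^ (d + n + 2 * d) * (b ^ d * b ^ n * P) :=
            mul_le_mul_of_nonneg_right (pow2_le (by omega)) (by positivity)
        _ = 2 ^ (d + n) * b ^ (d + n) * (4 ^ d * P) := by
            rw [four_pow d, pow_add, pow_add, pow_add]; ring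
    have h7 : ((2 * b) ^ (d + n) / (2 * 4 ^ (k + 1) * (P * b ^ n))) / 4 ≤
        Rseq c N R (k + 1 + 1) / 4 := by
      apply div_le_div_of_nonneg_right hlow2 (by norm_num)
    linarith

lemma Rseq_pow_growth (hN : 10 ≤ N) (hR : 1 ≤ R) (hOB : OneBound c N R) (m : ℕ)
    (hm : 1 ≤ m) : ∀ n : ℕ, (2:ℝ) ^ n ≤ Rseq c N R (m + n) := by
  intro n
  induction n with
  | zero =>
    simpa using le_trans hR (grand hN hR hOB m hm).1
  | succ n ih =>
    have h := grand hN hR hOB (m + n) (by omega)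
    have hpos : (0:ℝ) ≤ Rseq c N R (m + n) := by
      have : (0:ℝ) < 2 ^ n := by positivity
      linarith
    have : (2:ℝ) ^ (n + 1) = 2 * 2 ^ n := by rw [pow_succ]; ring
    rw [show m + (n + 1) = m + n + 1 by omega, this]
    nlinarith [h.2]

end Stmt16Aux

/-- There is `R₀ > 0` (depending only on `c`, `N`) such that for `R ≥ R₀`, every
`k ≥ 1`, every `z ∈ B_k` and every `n ≥ 0`: `f^n(z) ∈ B_{k+n}`, in particular
`|f^n(z)| ≥ 4 R_{k+n}`; consequently the iterates tend to `∞` uniformly on `B_k`. -/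
theorem stmt16 (c : ℂ) (N : ℕ) (hN : 10 ≤ N) :
    ∃ R₀ : ℝ, 0 < R₀ ∧
      ∀ R : ℝ, R₀ ≤ R → OneBound c N R →
        ∀ k : ℕ, 1 ≤ k →
          (∀ z ∈ Bset c N R k, ∀ n : ℕ,
            (flim c N R)^[n] z ∈ Bset c N R (k + n) ∧
            4 * Rseq c N R (k + n) ≤ ‖(flim c N R)^[n] z‖) ∧
          (∀ M : ℝ, ∃ n₀ : ℕ, ∀ n : ℕ, n₀ ≤ n →
            ∀ z ∈ Bset c N R k, M ≤ ‖(flim c N R)^[n] z‖) := by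
  refine ⟨1, one_pos, ?_⟩
  intro R hR hOB k hk
  have hiter : ∀ n : ℕ, ∀ z ∈ Bset c N R k, (flim c N R)^[n] z ∈ Bset c N R (k + n) := by
    intro n
    induction n with
    | zero => intro z hz; simpa using hz
    | succ n ih =>
      intro z hz
      rw [Function.iterate_succ_apply']
      have h1 := ih z hz
      have h2 := Stmt16Aux.step_main hN hR hOB (k + n) (by omega) h1
      rwa [show k + n + 1 = k + (n + 1) by omega] at h2
  constructor
  · intro z hz n
    exact ⟨hiter n z hz, (hiter n z hz).1⟩
  · intro M
    obtain ⟨n₀, hn₀⟩ := pow_unbounded_of_one_lt M (by norm_num : (1:ℝ) < 2)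
    refine ⟨n₀, fun n hn z hz => ?_⟩
    have hmem := hiter n z hz
    have h1 : 4 * Rseq c N R (k + n) ≤ ‖(flim c N R)^[n] z‖ := hmem.1
    have h2 : (2:ℝ) ^ n ≤ Rseq c N R (k + n) :=
      Stmt16Aux.Rseq_pow_growth hN hR hOB k hk n
    have h3 : (2:ℝ) ^ n₀ ≤ 2 ^ n := pow_le_pow_right₀ (by norm_num) hn
    have h4 : (0:ℝ) ≤ Rseq c N R (k + n) := by
      have : (0:ℝ) < 2 ^ n := by positivity
      linarith
    linarith [hn₀.le]

end
end
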